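/- arXiv:1306.3047 — 6 statements merged into one kernel-verified Lean document; each statement's English description precedes it below -/
import Mathlib

section
/- Let n, m ≥ 1 and let S be an n×m complex matrix all of whose entries are algebraic over ℚ, and suppose that ᵗσS ∉ ℤᵐ for every σ ∈ ℤⁿ \ {0}. Then there exist constants C > 0 and a ≥ 0 such that ‖ᵗσS + ᵗτ‖ ≥ C·exp(−a·|σ|) for all σ ∈ ℤⁿ \ {0} and all τ ∈ ℤᵐ, where ‖·‖ denotes the supremum norm on ℂᵐ and |σ| = max₁≤i≤n |σᵢ|. -/
open IntermediateField in
private lemma denom_aux (K : IntermediateField ℚ ℂ) [FiniteDimensional ℚ K] (x : K) :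
    ∃ d : ℤ, d ≠ 0 ∧ IsIntegral ℤ ((d : K) * x) := by
  have halg : IsAlgebraic ℤ x := by
    have h1 : IsAlgebraic ℚ x := (IsIntegral.isAlgebraic (IsIntegral.of_finite ℚ x))
    exact (IsFractionRing.isAlgebraic_iff ℤ ℚ K).mpr h1
  obtain ⟨d, hd, hyd⟩ := halg.exists_integral_multiple
  refine ⟨d, hd, ?_⟩
  rwa [Algebra.smul_def, eq_intCast] at hyd

set_option maxHeartbeats 2000000 in
/-- Theorem 4.3.  If `S` is an `n × m` complex matrix with
algebraic entries such that `ᵗσ S ∉ ℤᵐ` for every nonzero `σ ∈ ℤⁿ` (i.e. the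
lattice spanned by the columns of `(Iₙ S)` defines a Cousin group), then there
are constants `C > 0` and `a ≥ 0` with
`‖ᵗσ S + ᵗτ‖ ≥ C · exp (−a·|σ|)` for all nonzero `σ ∈ ℤⁿ` and all `τ ∈ ℤᵐ`,
where `‖·‖` is the sup norm on `ℂᵐ` and `|σ| = max |σᵢ|`. -/
theorem stmt2 (n m : ℕ) (hn : 1 ≤ n) (hm : 1 ≤ m)
    (S : Matrix (Fin n) (Fin m) ℂ)
    (halg : ∀ i j, IsAlgebraic ℚ (S i j))
    (hCousin : ∀ σ : Fin n → ℤ, σ ≠ 0 →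
      ¬ ∃ τ : Fin m → ℤ, ∀ k : Fin m, ∑ i, (σ i : ℂ) * S i k = (τ k : ℂ)) :
    ∃ C : ℝ, 0 < C ∧ ∃ a : ℝ, 0 ≤ a ∧
      ∀ σ : Fin n → ℤ, σ ≠ 0 → ∀ τ : Fin m → ℤ,
        ‖(fun k : Fin m => ∑ i, (σ i : ℂ) * S i k + (τ k : ℂ))‖ ≥
          C * Real.exp (-a * ‖σ‖) := by
  classical
  -- the number field generated by the entries of S
  set sSet : Set ℂ := Set.range (fun p : Fin n × Fin m => S p.1 p.2) with hsSet
  haveI := (Set.finite_range (fun p : Fin n × Fin m => S p.1 p.2)).to_subtype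
  set K := IntermediateField.adjoin ℚ sSet with hK
  haveI : FiniteDimensional ℚ K := IntermediateField.finiteDimensional_adjoin
    (fun x hx => by obtain ⟨⟨i, j⟩, rfl⟩ := hx; exact (halg i j).isIntegral)
  have hmem : ∀ i j, S i j ∈ K := fun i j =>
    IntermediateField.subset_adjoin ℚ _ ⟨(i, j), rfl⟩
  set s' : Fin n → Fin m → K := fun i j => ⟨S i j, hmem i j⟩ with hs'
  -- a common denominator d
  have hden : ∀ p : Fin n × Fin m, ∃ d : ℤ, d ≠ 0 ∧ IsIntegral ℤ ((d : K) * s' p.1 p.2) :=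
    fun p => denom_aux K _
  choose dd hdd hint using hden
  set d : ℤ := ∏ p : Fin n × Fin m, dd p with hd
  have hd0 : d ≠ 0 := Finset.prod_ne_zero_iff.mpr (fun p _ => hdd p)
  have hdint : ∀ i j, IsIntegral ℤ ((d : K) * s' i j) := by
    intro i j
    have h1 : IsIntegral ℤ (((∏ p ∈ Finset.univ.erase (i, j), dd p : ℤ) : K)) := by
      rw [← map_intCast (algebraMap ℤ K)]
      exact isIntegral_algebraMap
    have h2 := h1.mul (hint (i, j))
    have h3 : ((∏ p ∈ Finset.univ.erase (i, j), dd p : ℤ) : K) *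
        ((dd (i, j) : K) * s' (i, j).1 (i, j).2) = (d : K) * s' i j := by
      rw [hd, ← Finset.mul_prod_erase _ _ (Finset.mem_univ (i, j))]
      push_cast
      ring
    rwa [h3] at h2
  -- embeddings of K into ℂ
  set φ₀ : K →ₐ[ℚ] ℂ := K.val with hφ₀
  set D : ℕ := Module.finrank ℚ K with hD
  have hcard : Fintype.card (K →ₐ[ℚ] ℂ) = D := AlgHom.card ℚ K ℂ
  have hD1 : 1 ≤ D := Module.finrank_pos
  clear_value D
  -- a bound A for all conjugates of all entries
  set A : ℝ := 1 + ∑ φ : K →ₐ[ℚ] ℂ, ∑ i : Fin n, ∑ j : Fin m, ‖φ (s' i j)‖ with hA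
  have hA1 : (1 : ℝ) ≤ A := le_add_of_nonneg_right (by positivity)
  have hA0 : (0 : ℝ) < A := lt_of_lt_of_le one_pos hA1
  have hAle : ∀ (φ : K →ₐ[ℚ] ℂ) i j, ‖φ (s' i j)‖ ≤ A := by
    intro φ i j
    have h1 : ‖φ (s' i j)‖ ≤ ∑ j' : Fin m, ‖φ (s' i j')‖ :=
      Finset.single_le_sum (f := fun j' => ‖φ (s' i j')‖)
        (fun _ _ => norm_nonneg _) (Finset.mem_univ j)
    have h2 : ∑ j' : Fin m, ‖φ (s' i j')‖ ≤ ∑ i' : Fin n, ∑ j' : Fin m, ‖φ (s' i' j')‖ :=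
      Finset.single_le_sum (f := fun i' => ∑ j' : Fin m, ‖φ (s' i' j')‖)
        (fun _ _ => Finset.sum_nonneg fun _ _ => norm_nonneg _) (Finset.mem_univ i)
    have h3 : ∑ i' : Fin n, ∑ j' : Fin m, ‖φ (s' i' j')‖ ≤
        ∑ ψ : K →ₐ[ℚ] ℂ, ∑ i' : Fin n, ∑ j' : Fin m, ‖ψ (s' i' j')‖ :=
      Finset.single_le_sum (f := fun ψ : K →ₐ[ℚ] ℂ => ∑ i' : Fin n, ∑ j' : Fin m, ‖ψ (s' i' j')‖)
        (fun _ _ => Finset.sum_nonneg fun _ _ => Finset.sum_nonneg fun _ _ => norm_nonneg _)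
        (Finset.mem_univ φ)
    rw [hA]; linarith
  have hSA : ∀ i j, ‖S i j‖ ≤ A := fun i j => hAle φ₀ i j
  -- the constants
  set dR : ℝ := |(d : ℝ)| with hdR
  have hdR1 : (1 : ℝ) ≤ dR := by
    rw [hdR, ← Int.cast_abs]; exact_mod_cast Int.one_le_abs hd0
  have hdR0 : (0 : ℝ) < dR := lt_of_lt_of_le one_pos hdR1
  set E : ℝ := dR * (2 * n * A + 1) with hE
  have hE1 : (1 : ℝ) ≤ E := by
    have hn1 : (1 : ℝ) ≤ (n : ℝ) := by exact_mod_cast hn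
    have h1 : (1 : ℝ) ≤ 2 * n * A + 1 := by nlinarith
    have h2 := mul_le_mul hdR1 h1 zero_le_one (le_trans zero_le_one hdR1)
    rw [hE]; linarith
  have hE0 : (0 : ℝ) < E := lt_of_lt_of_le one_pos hE1
  refine ⟨min 1 (1 / (dR * E ^ (D - 1))),
    lt_min one_pos (one_div_pos.mpr (mul_pos hdR0 (pow_pos hE0 _))),
    ((D : ℝ) - 1), by have : (1:ℝ) ≤ (D:ℝ) := by exact_mod_cast hD1
                      linarith, ?_⟩
  intro σ hσ τ
  set L : Fin m → ℂ := fun k : Fin m => ∑ i, (σ i : ℂ) * S i k + (τ k : ℂ) with hL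
  set a : ℝ := (D : ℝ) - 1 with ha
  have ha0 : 0 ≤ a := by
    have : (1:ℝ) ≤ (D:ℝ) := by exact_mod_cast hD1
    rw [ha]; linarith
  have hacast : a = ((D - 1 : ℕ) : ℝ) := by
    rw [ha, Nat.cast_sub hD1]; norm_num
  -- ‖σ‖ ≥ 1
  have hσ1 : (1 : ℝ) ≤ ‖σ‖ := by
    obtain ⟨i, hi⟩ := Function.ne_iff.mp hσ
    calc (1 : ℝ) ≤ ‖σ i‖ := by
          rw [Int.norm_eq_abs]; exact_mod_cast Int.one_le_abs hi
      _ ≤ ‖σ‖ := norm_le_pi_norm σ i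
  have hσ0 : (0 : ℝ) < ‖σ‖ := lt_of_lt_of_le one_pos hσ1
  have hσi : ∀ i, ‖(σ i : ℂ)‖ ≤ ‖σ‖ := by
    intro i
    have h : ‖(σ i : ℂ)‖ = ‖σ i‖ := by
      simp [Int.norm_eq_abs]
    rw [h]; exact norm_le_pi_norm σ i
  have hexple : Real.exp (-a * ‖σ‖) ≤ 1 := by
    have hmn := mul_nonneg ha0 hσ0.le
    calc Real.exp (-a * ‖σ‖) ≤ Real.exp 0 := Real.exp_le_exp.mpr (by linarith)
      _ = 1 := Real.exp_zero
  by_cases hbig : 1 ≤ ‖L‖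
  · calc min 1 (1 / (dR * E ^ (D - 1))) * Real.exp (-a * ‖σ‖)
        ≤ 1 * 1 := mul_le_mul (min_le_left _ _) hexple (Real.exp_pos _).le zero_le_one
      _ ≤ ‖L‖ := by simpa using hbig
  · push_neg at hbig
    -- a coordinate where L is nonzero
    obtain ⟨k, hk⟩ : ∃ k, L k ≠ 0 := by
      by_contra h
      push_neg at h
      refine hCousin σ hσ ⟨fun k => -τ k, fun k => ?_⟩
      have := h k
      rw [hL] at this
      push_cast
      have h2 : ∑ i, (σ i : ℂ) * S i k + (τ k : ℂ) = 0 := this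
      linear_combination h2
    -- the algebraic integer d * (⟨σ, s' · k⟩ + τ k)
    set x : K := ∑ i, (σ i : K) * s' i k + (τ k : K) with hx
    set β : K := (d : K) * x with hβ
    have hφx : ∀ φ : K →ₐ[ℚ] ℂ, φ x = ∑ i, (σ i : ℂ) * φ (s' i k) + (τ k : ℂ) := by
      intro φ
      rw [hx, map_add, map_sum, map_intCast]
      congr 1
      refine Finset.sum_congr rfl fun i _ => ?_
      rw [map_mul, map_intCast]
    have hφ₀x : φ₀ x = L k := by
      rw [hφx φ₀]; rfl
    have hφβ : ∀ φ : K →ₐ[ℚ] ℂ, φ β = (d : ℂ) * φ x := by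
      intro φ; rw [hβ, map_mul, map_intCast]
    have hβ0 : β ≠ 0 := by
      intro h
      apply hk
      have : φ₀ β = 0 := by rw [h, map_zero]
      rw [hφβ, hφ₀x] at this
      rcases mul_eq_zero.mp this with h' | h'
      · exact absurd (by exact_mod_cast h') hd0
      · exact h'
    have hβint : IsIntegral ℤ β := by
      have : β = (∑ i, (σ i : K) * ((d : K) * s' i k)) + ((d * τ k : ℤ) : K) := by
        rw [hβ, hx]
        push_cast
        rw [mul_add, Finset.mul_sum]
        congr 1
        exact Finset.sum_congr rfl fun i _ => by ring
      rw [this]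
      refine IsIntegral.add (IsIntegral.sum _ fun i _ => ?_) ?_
      · have hz : IsIntegral ℤ ((σ i : K)) := by
          rw [← map_intCast (algebraMap ℤ K)]; exact isIntegral_algebraMap
        exact hz.mul (hdint i k)
      · rw [← map_intCast (algebraMap ℤ K)]; exact isIntegral_algebraMap
    -- the norm of β is a nonzero rational integer
    have hN0 : Algebra.norm ℚ β ≠ 0 := by rwa [Algebra.norm_ne_zero_iff]
    have hNint : IsIntegral ℤ (Algebra.norm ℚ β) := Algebra.isIntegral_norm ℚ hβint
    obtain ⟨z, hz⟩ : ∃ z : ℤ, (z : ℚ) = Algebra.norm ℚ β := by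
      obtain ⟨z, hz⟩ := IsIntegrallyClosed.isIntegral_iff.mp hNint
      exact ⟨z, by exact_mod_cast hz⟩
    have h1N : (1 : ℝ) ≤ ‖algebraMap ℚ ℂ (Algebra.norm ℚ β)‖ := by
      rw [← hz]
      have hz0 : z ≠ 0 := by
        intro h; apply hN0; rw [← hz, h]; norm_num
      have h' : ‖algebraMap ℚ ℂ ((z : ℚ))‖ = |(z : ℝ)| := by
        rw [map_intCast]
        exact Complex.norm_intCast z
      rw [h', ← Int.cast_abs]
      exact_mod_cast Int.one_le_abs hz0
    have hprod : ‖algebraMap ℚ ℂ (Algebra.norm ℚ β)‖ = ∏ φ : K →ₐ[ℚ] ℂ, ‖φ β‖ := by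
      rw [Algebra.norm_eq_prod_embeddings ℚ ℂ β, norm_prod]
    -- the bound on τ k
    have hτk : ‖(τ k : ℂ)‖ ≤ (1 + n * A) * ‖σ‖ := by
      have h1 : (τ k : ℂ) = L k - ∑ i, (σ i : ℂ) * S i k := by rw [hL]; ring
      have h2 : ‖(τ k : ℂ)‖ ≤ ‖L k‖ + ‖∑ i, (σ i : ℂ) * S i k‖ := by
        rw [h1]; exact norm_sub_le _ _
      have h3 : ‖L k‖ ≤ ‖L‖ := norm_le_pi_norm L k
      have h4 : ‖∑ i, (σ i : ℂ) * S i k‖ ≤ n * A * ‖σ‖ := by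
        calc ‖∑ i, (σ i : ℂ) * S i k‖ ≤ ∑ i, ‖(σ i : ℂ) * S i k‖ := norm_sum_le _ _
          _ ≤ ∑ _i : Fin n, ‖σ‖ * A := by
              refine Finset.sum_le_sum fun i _ => ?_
              rw [norm_mul]
              exact mul_le_mul (hσi i) (hSA i k) (norm_nonneg _) hσ0.le
          _ = n * (‖σ‖ * A) := by rw [Finset.sum_const, Finset.card_univ, Fintype.card_fin,
              nsmul_eq_mul]
          _ = n * A * ‖σ‖ := by ring
      have hn0 : (0 : ℝ) ≤ (n : ℝ) := Nat.cast_nonneg n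
      nlinarith
    -- the bound on every conjugate of β
    have hφb : ∀ φ : K →ₐ[ℚ] ℂ, ‖φ β‖ ≤ E * ‖σ‖ := by
      intro φ
      rw [hφβ, norm_mul]
      have hd' : ‖(d : ℂ)‖ = dR := by
        rw [Complex.norm_intCast, hdR]
      rw [hd', hφx]
      have h4 : ‖∑ i, (σ i : ℂ) * φ (s' i k)‖ ≤ n * A * ‖σ‖ := by
        calc ‖∑ i, (σ i : ℂ) * φ (s' i k)‖ ≤ ∑ i, ‖(σ i : ℂ) * φ (s' i k)‖ := norm_sum_le _ _
          _ ≤ ∑ _i : Fin n, ‖σ‖ * A := by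
              refine Finset.sum_le_sum fun i _ => ?_
              rw [norm_mul]
              exact mul_le_mul (hσi i) (hAle φ i k) (norm_nonneg _) hσ0.le
          _ = n * (‖σ‖ * A) := by rw [Finset.sum_const, Finset.card_univ, Fintype.card_fin,
              nsmul_eq_mul]
          _ = n * A * ‖σ‖ := by ring
      have h5 : ‖∑ i, (σ i : ℂ) * φ (s' i k) + (τ k : ℂ)‖ ≤
          n * A * ‖σ‖ + (1 + n * A) * ‖σ‖ := le_trans (norm_add_le _ _) (by linarith)
      calc dR * ‖∑ i, (σ i : ℂ) * φ (s' i k) + (τ k : ℂ)‖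
          ≤ dR * (n * A * ‖σ‖ + (1 + n * A) * ‖σ‖) := by
            exact mul_le_mul_of_nonneg_left h5 hdR0.le
        _ = E * ‖σ‖ := by rw [hE]; ring
    -- split off the identity embedding from the product
    have hkey : (1 : ℝ) ≤ ‖φ₀ β‖ * (E * ‖σ‖) ^ (D - 1) := by
      have hsplit : ∏ φ : K →ₐ[ℚ] ℂ, ‖φ β‖ =
          ‖φ₀ β‖ * ∏ φ ∈ Finset.univ.erase φ₀, ‖φ β‖ :=
        (Finset.mul_prod_erase _ _ (Finset.mem_univ φ₀)).symm
      have hcard' : (Finset.univ.erase φ₀).card = D - 1 := by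
        rw [Finset.card_erase_of_mem (Finset.mem_univ φ₀), Finset.card_univ, hcard]
      have hrest : ∏ φ ∈ Finset.univ.erase φ₀, ‖φ β‖ ≤ (E * ‖σ‖) ^ (D - 1) := by
        rw [← hcard']
        rw [← Finset.prod_const]
        exact Finset.prod_le_prod (fun _ _ => norm_nonneg _) (fun φ _ => hφb φ)
      calc (1 : ℝ) ≤ ‖algebraMap ℚ ℂ (Algebra.norm ℚ β)‖ := h1N
        _ = ‖φ₀ β‖ * ∏ φ ∈ Finset.univ.erase φ₀, ‖φ β‖ := by rw [hprod, hsplit]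
        _ ≤ ‖φ₀ β‖ * (E * ‖σ‖) ^ (D - 1) :=
            mul_le_mul_of_nonneg_left hrest (norm_nonneg _)
    -- deduce the lower bound on ‖L k‖
    have hφ₀β : ‖φ₀ β‖ = dR * ‖L k‖ := by
      rw [hφβ, hφ₀x, norm_mul, Complex.norm_intCast, hdR]
    have hP : (0 : ℝ) < dR * E ^ (D - 1) * ‖σ‖ ^ (D - 1) :=
      mul_pos (mul_pos hdR0 (pow_pos hE0 _)) (pow_pos hσ0 _)
    have hLk : 1 / (dR * E ^ (D - 1) * ‖σ‖ ^ (D - 1)) ≤ ‖L k‖ := by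
      rw [div_le_iff₀ hP]
      calc (1 : ℝ) ≤ ‖φ₀ β‖ * (E * ‖σ‖) ^ (D - 1) := hkey
        _ = dR * ‖L k‖ * (E ^ (D - 1) * ‖σ‖ ^ (D - 1)) := by rw [hφ₀β, mul_pow]
        _ = ‖L k‖ * (dR * E ^ (D - 1) * ‖σ‖ ^ (D - 1)) := by ring
    -- the exponential bound
    have hexp2 : Real.exp (-a * ‖σ‖) ≤ 1 / ‖σ‖ ^ (D - 1) := by
      rw [le_div_iff₀ (pow_pos hσ0 _)]
      have h1 : Real.exp (-a * ‖σ‖) = (Real.exp ‖σ‖ ^ (D - 1))⁻¹ := by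
        rw [hacast, ← Real.exp_nat_mul, ← Real.exp_neg]
        ring_nf
      have h2 : ‖σ‖ ^ (D - 1) ≤ Real.exp ‖σ‖ ^ (D - 1) := by
        apply pow_le_pow_left₀ hσ0.le
        have := Real.add_one_le_exp ‖σ‖
        linarith
      have h3 : (0 : ℝ) < Real.exp ‖σ‖ ^ (D - 1) := pow_pos (Real.exp_pos _) _
      rw [h1]
      calc (Real.exp ‖σ‖ ^ (D - 1))⁻¹ * ‖σ‖ ^ (D - 1)
          ≤ (Real.exp ‖σ‖ ^ (D - 1))⁻¹ * Real.exp ‖σ‖ ^ (D - 1) :=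
            mul_le_mul_of_nonneg_left h2 (inv_nonneg.mpr h3.le)
        _ = 1 := inv_mul_cancel₀ h3.ne'
    -- conclude
    have hfinal : min 1 (1 / (dR * E ^ (D - 1))) * Real.exp (-a * ‖σ‖) ≤ ‖L k‖ := by
      calc min 1 (1 / (dR * E ^ (D - 1))) * Real.exp (-a * ‖σ‖)
          ≤ (1 / (dR * E ^ (D - 1))) * (1 / ‖σ‖ ^ (D - 1)) :=
            mul_le_mul (min_le_right _ _) hexp2 (Real.exp_pos _).le
              (one_div_pos.mpr (mul_pos hdR0 (pow_pos hE0 _))).le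
        _ = 1 / (dR * E ^ (D - 1) * ‖σ‖ ^ (D - 1)) := by
            rw [div_mul_div_comm, one_mul]
        _ ≤ ‖L k‖ := hLk
    calc min 1 (1 / (dR * E ^ (D - 1))) * Real.exp (-a * ‖σ‖)
        ≤ ‖L k‖ := hfinal
      _ ≤ ‖L‖ := norm_le_pi_norm L k
end

section
/- Let K be a number field of degree n = s + 2t over ℚ with s ≥ 1 real embeddings σ₁, …, σ_s and 2t ≥ 2 complex embeddings σ_{s+1}, …, σ_{s+t}, σ̄_{s+1}, …, σ̄_{s+t} (one from each conjugate pair chosen), and let σ : 𝒪_K → ℂ^{s+t} be given by σ(x) = (σ₁(x), …, σ_{s+t}(x)). Then σ(𝒪_K) is a lattice of rank n in ℂ^{s+t}, and there exist an invertible complex linear map T ∈ GL_{s+t}(ℂ) and an (s+t)×t complex matrix S with all entries algebraic over ℚ such that T(σ(𝒪_K)) is the additive group generated by the columns of (I_{s+t} S), and there exist constants C > 0, a ≥ 0 with ‖ᵗμS + ᵗν‖ ≥ C·exp(−a·|μ|) for all μ ∈ ℤ^{s+t} \ {0} and all ν ∈ ℤᵗ (‖·‖ the supremum norm, |μ| =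 maxᵢ|μᵢ|). -/
set_option maxHeartbeats 1000000

open NumberField Finset

theorem aux_liou (F : IntermediateField ℚ ℂ) [FiniteDimensional ℚ F]
    {ι₁ ι₂ : Type*} [Fintype ι₁] [Fintype ι₂] [Nonempty ι₂]
    (S' : Matrix ι₁ ι₂ F)
    (hNV : ∀ μ : ι₁ → ℤ, μ ≠ 0 → ∀ ν : ι₂ → ℤ,
      (fun k : ι₂ => ∑ i, (μ i : ℂ) * ((S' i k : ℂ)) + (ν k : ℂ)) ≠ 0) :
    ∃ C : ℝ, 0 < C ∧ ∃ a : ℝ, 0 ≤ a ∧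
      ∀ μ : ι₁ → ℤ, μ ≠ 0 → ∀ ν : ι₂ → ℤ,
        ‖(fun k : ι₂ => ∑ i, (μ i : ℂ) * ((S' i k : ℂ)) + (ν k : ℂ))‖ ≥
          C * Real.exp (-a * ‖μ‖) := by
  classical
  -- common denominator
  obtain ⟨D, hD0, hDint⟩ := exists_integral_multiples ℤ ℚ
    (Finset.image (fun p : ι₁ × ι₂ => S' p.1 p.2) Finset.univ)
  have hDS : ∀ i k, IsIntegral ℤ (D • S' i k) := fun i k =>
    hDint _ (Finset.mem_image.mpr ⟨(i, k), Finset.mem_univ _, rfl⟩)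
  obtain ⟨e, he⟩ : ∃ e : ℕ, Fintype.card (F →ₐ[ℚ] ℂ) = e + 1 := by
    refine ⟨Fintype.card (F →ₐ[ℚ] ℂ) - 1, ?_⟩
    have : 0 < Fintype.card (F →ₐ[ℚ] ℂ) := Fintype.card_pos_iff.mpr ⟨F.val⟩
    omega
  set c₂ : ℝ := 1 + ∑ τ : F →ₐ[ℚ] ℂ, ∑ i : ι₁, ∑ k : ι₂, ‖τ (D • S' i k)‖ with hc₂def
  have hc₂1 : (1:ℝ) ≤ c₂ := by
    have : (0:ℝ) ≤ ∑ τ : F →ₐ[ℚ] ℂ, ∑ i : ι₁, ∑ k : ι₂, ‖τ (D • S' i k)‖ :=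
      Finset.sum_nonneg fun _ _ => Finset.sum_nonneg fun _ _ => Finset.sum_nonneg
        fun _ _ => norm_nonneg _
    linarith
  have hc₂ : ∀ (τ : F →ₐ[ℚ] ℂ) i k, ‖τ (D • S' i k)‖ ≤ c₂ := by
    intro τ i k
    have h1 : ‖τ (D • S' i k)‖ ≤ ∑ k' : ι₂, ‖τ (D • S' i k')‖ :=
      Finset.single_le_sum (f := fun k' => ‖τ (D • S' i k')‖)
        (fun _ _ => norm_nonneg _) (Finset.mem_univ k)
    have h2 : ∑ k' : ι₂, ‖τ (D • S' i k')‖ ≤ ∑ i' : ι₁, ∑ k' : ι₂, ‖τ (D • S' i' k')‖ :=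
      Finset.single_le_sum (f := fun i' => ∑ k' : ι₂, ‖τ (D • S' i' k')‖)
        (fun _ _ => Finset.sum_nonneg fun _ _ => norm_nonneg _) (Finset.mem_univ i)
    have h3 : ∑ i' : ι₁, ∑ k' : ι₂, ‖τ (D • S' i' k')‖ ≤
        ∑ τ' : F →ₐ[ℚ] ℂ, ∑ i' : ι₁, ∑ k' : ι₂, ‖τ' (D • S' i' k')‖ :=
      Finset.single_le_sum (f := fun τ' => ∑ i' : ι₁, ∑ k' : ι₂, ‖τ' (D • S' i' k')‖)
        (fun _ _ => Finset.sum_nonneg fun _ _ => Finset.sum_nonneg fun _ _ => norm_nonneg _)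
        (Finset.mem_univ τ)
    linarith
  set c₅ : ℝ := 1 + ∑ i : ι₁, ∑ k : ι₂, ‖(S' i k : ℂ)‖ with hc₅def
  have hc₅1 : (1:ℝ) ≤ c₅ := by
    have : (0:ℝ) ≤ ∑ i : ι₁, ∑ k : ι₂, ‖(S' i k : ℂ)‖ :=
      Finset.sum_nonneg fun _ _ => Finset.sum_nonneg fun _ _ => norm_nonneg _
    linarith
  have hc₅ : ∀ k, ∑ i : ι₁, ‖(S' i k : ℂ)‖ ≤ c₅ := by
    intro k
    have h1 : ∀ i, ‖(S' i k : ℂ)‖ ≤ ∑ k' : ι₂, ‖(S' i k' : ℂ)‖ := fun i =>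
      Finset.single_le_sum (f := fun k' => ‖(S' i k' : ℂ)‖)
        (fun _ _ => norm_nonneg _) (Finset.mem_univ k)
    have h2 : ∑ i : ι₁, ‖(S' i k : ℂ)‖ ≤ ∑ i : ι₁, ∑ k' : ι₂, ‖(S' i k' : ℂ)‖ :=
      Finset.sum_le_sum fun i _ => h1 i
    linarith
  set R : ℝ := c₅ + 1 with hRdef
  set c₆ : ℝ := (Fintype.card ι₁ : ℝ) * c₂ + |(D:ℝ)| * R + 1 with hc₆def
  have hD0' : (1:ℝ) ≤ |(D:ℝ)| := by exact_mod_cast Int.one_le_abs hD0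
  have hc₆1 : (1:ℝ) ≤ c₆ := by
    have h1 : (0:ℝ) ≤ (Fintype.card ι₁ : ℝ) * c₂ := by positivity
    have h2 : (0:ℝ) ≤ |(D:ℝ)| * R := by
      have : (0:ℝ) ≤ R := by rw [hRdef]; linarith
      positivity
    rw [hc₆def]; linarith
  have hc₆0 : (0:ℝ) < c₆ := lt_of_lt_of_le one_pos hc₆1
  have hDpos : (0:ℝ) < |(D:ℝ)| := lt_of_lt_of_le one_pos hD0'
  have hPpos : (0:ℝ) < (|(D:ℝ)| * c₆ ^ e)⁻¹ :=
    inv_pos.mpr (mul_pos hDpos (pow_pos hc₆0 e))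
  refine ⟨min ((|(D:ℝ)| * c₆ ^ e)⁻¹) 1, lt_min hPpos one_pos, (e:ℝ), Nat.cast_nonneg e,
    ?_⟩
  intro μ hμ ν
  set α : ι₂ → ℂ := fun k : ι₂ => ∑ i, (μ i : ℂ) * ((S' i k : ℂ)) + (ν k : ℂ) with hαdef
  -- ‖μ‖ ≥ 1
  have hm1 : (1:ℝ) ≤ ‖μ‖ := by
    obtain ⟨i, hi⟩ := Function.ne_iff.mp hμ
    calc (1:ℝ) ≤ ‖μ i‖ := by
          rw [Int.norm_eq_abs]; exact_mod_cast Int.one_le_abs hi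
      _ ≤ ‖μ‖ := norm_le_pi_norm μ i
  have hμi : ∀ i, |(μ i : ℝ)| ≤ ‖μ‖ := by
    intro i
    have := norm_le_pi_norm μ i
    rwa [Int.norm_eq_abs] at this
  have hexp : Real.exp (-(e:ℝ) * ‖μ‖) ≤ 1 :=
    Real.exp_le_one_iff.mpr (by nlinarith)
  by_cases hcase : ‖ν‖ ≤ R * ‖μ‖
  · -- Liouville case
    obtain ⟨k, hk⟩ := Function.ne_iff.mp (hNV μ hμ ν)
    set αF : F := ∑ i, (μ i : F) * S' i k + (ν k : F) with hαFdef
    have hcast : (αF : ℂ) = α k := by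
      push_cast [hαFdef, hαdef]
      rfl
    have hαF0 : αF ≠ 0 := by
      intro h
      apply hk
      show α k = (0 : ι₂ → ℂ) k
      rw [← hcast, h, ZeroMemClass.coe_zero, Pi.zero_apply]
    have hDF : ((D:F)) ≠ 0 := Int.cast_ne_zero.mpr hD0
    set γ : F := (D : F) * αF with hγdef
    have hγ0 : γ ≠ 0 := mul_ne_zero hDF hαF0
    have hintcast : ∀ z : ℤ, IsIntegral ℤ ((z : F)) := by
      intro z
      have : ((z : F)) = algebraMap ℤ F z := by simp
      rw [this]
      exact isIntegral_algebraMap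
    have hγform : γ = ∑ i, (μ i : F) * (D • S' i k) + ((D * ν k : ℤ) : F) := by
      rw [hγdef, hαFdef]
      simp only [zsmul_eq_mul]
      push_cast
      rw [mul_add, Finset.mul_sum]
      congr 1
      exact Finset.sum_congr rfl fun i _ => by ring
    have hγint : IsIntegral ℤ γ := by
      rw [hγform]
      refine IsIntegral.add (IsIntegral.sum _ fun i _ => ?_) (hintcast _)
      exact (hintcast (μ i)).mul (hDS i k)
    have hNq0 : Algebra.norm ℚ γ ≠ 0 := Algebra.norm_ne_zero_iff.mpr hγ0
    have hNqint := Algebra.isIntegral_norm (R := ℤ) ℚ (L := F) hγint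
    obtain ⟨z, hz⟩ := IsIntegrallyClosed.isIntegral_iff.mp hNqint
    have hz0 : z ≠ 0 := by
      rintro rfl
      apply hNq0
      rw [← hz]
      simp
    have habs1 : (1:ℝ) ≤ ‖algebraMap ℚ ℂ (Algebra.norm ℚ γ)‖ := by
      rw [← hz]
      have h1 : (algebraMap ℚ ℂ) ((algebraMap ℤ ℚ) z) = (z:ℂ) := by push_cast; simp
      rw [h1, Complex.norm_intCast]
      exact_mod_cast Int.one_le_abs hz0
    have hprod : ‖algebraMap ℚ ℂ (Algebra.norm ℚ γ)‖ = ∏ τ : F →ₐ[ℚ] ℂ, ‖τ γ‖ := by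
      rw [Algebra.norm_eq_prod_embeddings, norm_prod]
    have hbound : ∀ τ : F →ₐ[ℚ] ℂ, ‖τ γ‖ ≤ c₆ * ‖μ‖ := by
      intro τ
      have hγ2 : τ γ = ∑ i, (μ i:ℂ) * τ (D • S' i k) + ((D * ν k : ℤ):ℂ) := by
        rw [hγform]
        rw [map_add, map_sum]
        congr 1
        · exact Finset.sum_congr rfl fun i _ => by rw [map_mul, map_intCast]
        · exact map_intCast _ _
      have h1 : ‖τ γ‖ ≤ ∑ i, ‖(μ i:ℂ) * τ (D • S' i k)‖ + ‖((D * ν k : ℤ):ℂ)‖ := by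
        rw [hγ2]
        exact (norm_add_le _ _).trans (by gcongr; exact norm_sum_le _ _)
      have h2 : ∑ i, ‖(μ i:ℂ) * τ (D • S' i k)‖ ≤ (Fintype.card ι₁ : ℝ) * c₂ * ‖μ‖ := by
        calc ∑ i, ‖(μ i:ℂ) * τ (D • S' i k)‖
            ≤ ∑ _i : ι₁, ‖μ‖ * c₂ := by
              refine Finset.sum_le_sum fun i _ => ?_
              rw [norm_mul, Complex.norm_intCast]
              have ha := hμi i
              have hb := hc₂ τ i k
              have hc : (0:ℝ) ≤ |(μ i : ℝ)| := abs_nonneg _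
              have hd : (0:ℝ) ≤ ‖τ (D • S' i k)‖ := norm_nonneg _
              nlinarith
          _ = (Fintype.card ι₁ : ℝ) * (‖μ‖ * c₂) := by
              rw [Finset.sum_const, Finset.card_univ, nsmul_eq_mul]
          _ = (Fintype.card ι₁ : ℝ) * c₂ * ‖μ‖ := by ring
      have h3 : ‖((D * ν k : ℤ):ℂ)‖ ≤ |(D:ℝ)| * R * ‖μ‖ := by
        rw [Complex.norm_intCast]
        push_cast
        rw [abs_mul]
        have hνk : |(ν k : ℝ)| ≤ ‖ν‖ := by
          have := norm_le_pi_norm ν k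
          rwa [Int.norm_eq_abs] at this
        have hR0 : (0:ℝ) ≤ R := by rw [hRdef]; linarith
        have := hcase
        nlinarith
      have hμ0 : (0:ℝ) ≤ ‖μ‖ := norm_nonneg _
      rw [hc₆def]
      nlinarith
    have hsplit : ∏ τ : F →ₐ[ℚ] ℂ, ‖τ γ‖
        = ‖(F.val : F →ₐ[ℚ] ℂ) γ‖ * ∏ τ ∈ Finset.univ.erase (F.val : F →ₐ[ℚ] ℂ), ‖τ γ‖ :=
      (Finset.mul_prod_erase Finset.univ _ (Finset.mem_univ _)).symm
    have hcm : (0:ℝ) < c₆ * ‖μ‖ := by nlinarith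
    have hprodbound : ∏ τ ∈ Finset.univ.erase (F.val : F →ₐ[ℚ] ℂ), ‖τ γ‖ ≤ (c₆ * ‖μ‖) ^ e := by
      have hcard : (Finset.univ.erase (F.val : F →ₐ[ℚ] ℂ)).card = e := by
        rw [Finset.card_erase_of_mem (Finset.mem_univ _), Finset.card_univ]
        exact (congrArg (· - 1) he).trans (Nat.add_sub_cancel e 1)
      calc ∏ τ ∈ Finset.univ.erase (F.val : F →ₐ[ℚ] ℂ), ‖τ γ‖
          ≤ ∏ _τ ∈ Finset.univ.erase (F.val : F →ₐ[ℚ] ℂ), (c₆ * ‖μ‖) :=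
            Finset.prod_le_prod (fun _ _ => norm_nonneg _) (fun τ _ => hbound τ)
        _ = (c₆ * ‖μ‖) ^ e := by rw [Finset.prod_const, hcard]
    have hkey : 1 ≤ ‖(F.val : F →ₐ[ℚ] ℂ) γ‖ * (c₆ * ‖μ‖) ^ e := by
      have h1 : (1:ℝ) ≤ ‖(F.val : F →ₐ[ℚ] ℂ) γ‖ *
          ∏ τ ∈ Finset.univ.erase (F.val : F →ₐ[ℚ] ℂ), ‖τ γ‖ := by
        rw [← hsplit, ← hprod]; exact habs1
      exact h1.trans (mul_le_mul_of_nonneg_left hprodbound (norm_nonneg _))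
    have hvalγ : ‖(F.val : F →ₐ[ℚ] ℂ) γ‖ = |(D:ℝ)| * ‖α k‖ := by
      have h1 : (F.val : F →ₐ[ℚ] ℂ) γ = (D:ℂ) * α k := by
        show ((γ : ℂ)) = _
        rw [hγdef]
        push_cast
        rw [hcast]
      rw [h1, norm_mul, Complex.norm_intCast]
    have hQ : (0:ℝ) < |(D:ℝ)| * (c₆ * ‖μ‖) ^ e := mul_pos hDpos (pow_pos hcm e)
    have hαklow : (|(D:ℝ)| * (c₆ * ‖μ‖) ^ e)⁻¹ ≤ ‖α k‖ := by
      rw [inv_le_iff_one_le_mul₀ hQ]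
      calc (1:ℝ) ≤ ‖(F.val : F →ₐ[ℚ] ℂ) γ‖ * (c₆ * ‖μ‖) ^ e := hkey
        _ = ‖α k‖ * (|(D:ℝ)| * (c₆ * ‖μ‖) ^ e) := by rw [hvalγ]; ring
    have hmexp : ‖μ‖ ^ e ≤ Real.exp ((e:ℝ) * ‖μ‖) := by
      have h1 : ‖μ‖ ≤ Real.exp ‖μ‖ := by
        have := Real.add_one_le_exp ‖μ‖
        linarith
      calc ‖μ‖ ^ e ≤ (Real.exp ‖μ‖) ^ e := pow_le_pow_left₀ (norm_nonneg _) h1 e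
        _ = Real.exp ((e:ℝ) * ‖μ‖) := (Real.exp_nat_mul _ e).symm
    have hfinal : (|(D:ℝ)| * c₆ ^ e)⁻¹ * Real.exp (-(e:ℝ) * ‖μ‖) ≤
        (|(D:ℝ)| * (c₆ * ‖μ‖) ^ e)⁻¹ := by
      rw [neg_mul, Real.exp_neg]
      rw [← mul_inv]
      have hQ2 : (0:ℝ) < |(D:ℝ)| * c₆ ^ e * Real.exp ((e:ℝ) * ‖μ‖) :=
        mul_pos (mul_pos hDpos (pow_pos hc₆0 e)) (Real.exp_pos _)
      apply inv_anti₀ hQ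
      calc |(D:ℝ)| * (c₆ * ‖μ‖) ^ e = |(D:ℝ)| * (c₆ ^ e * ‖μ‖ ^ e) := by rw [mul_pow]
        _ ≤ |(D:ℝ)| * (c₆ ^ e * Real.exp ((e:ℝ) * ‖μ‖)) := by
            have h4 : (0:ℝ) ≤ c₆ ^ e := le_of_lt (pow_pos hc₆0 e)
            have h6 : c₆ ^ e * ‖μ‖ ^ e ≤ c₆ ^ e * Real.exp ((e:ℝ) * ‖μ‖) :=
              mul_le_mul_of_nonneg_left hmexp h4
            exact mul_le_mul_of_nonneg_left h6 (abs_nonneg _)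
        _ = |(D:ℝ)| * c₆ ^ e * Real.exp ((e:ℝ) * ‖μ‖) := by ring
    calc ‖α‖ ≥ ‖α k‖ := norm_le_pi_norm α k
      _ ≥ (|(D:ℝ)| * (c₆ * ‖μ‖) ^ e)⁻¹ := hαklow
      _ ≥ (|(D:ℝ)| * c₆ ^ e)⁻¹ * Real.exp (-(e:ℝ) * ‖μ‖) := hfinal
      _ ≥ min ((|(D:ℝ)| * c₆ ^ e)⁻¹) 1 * Real.exp (-(e:ℝ) * ‖μ‖) :=
          mul_le_mul_of_nonneg_right (min_le_left _ _) (le_of_lt (Real.exp_pos _))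
  · -- large ν case
    push_neg at hcase
    obtain ⟨k₀, hk₀⟩ := Finite.exists_max fun k => ‖ν k‖
    have hν : ‖ν‖ ≤ |(ν k₀ : ℝ)| := by
      rw [← Int.norm_eq_abs]
      exact pi_norm_le_iff_of_nonneg (norm_nonneg _) |>.mpr hk₀
    have hsum : ‖∑ i, (μ i : ℂ) * ((S' i k₀ : ℂ))‖ ≤ c₅ * ‖μ‖ := by
      calc ‖∑ i, (μ i : ℂ) * ((S' i k₀ : ℂ))‖ ≤ ∑ i, ‖(μ i : ℂ) * ((S' i k₀ : ℂ))‖ :=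
            norm_sum_le _ _
        _ = ∑ i, |(μ i : ℝ)| * ‖(S' i k₀ : ℂ)‖ := by
            congr 1; funext i; rw [norm_mul]; congr 1; exact Complex.norm_intCast _
        _ ≤ ∑ i, ‖μ‖ * ‖(S' i k₀ : ℂ)‖ :=
            Finset.sum_le_sum fun i _ => by
              have := hμi i
              have := norm_nonneg ((S' i k₀ : ℂ)); nlinarith
        _ = ‖μ‖ * ∑ i, ‖(S' i k₀ : ℂ)‖ := by rw [Finset.mul_sum]
        _ ≤ ‖μ‖ * c₅ := by
            have := hc₅ k₀; nlinarith
        _ = c₅ * ‖μ‖ := mul_comm _ _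
    have hlow : (1:ℝ) ≤ ‖α k₀‖ := by
      have hν' : (ν k₀ : ℂ) = α k₀ - ∑ i, (μ i : ℂ) * ((S' i k₀ : ℂ)) := by
        rw [hαdef]; ring
      have h1 : |(ν k₀ : ℝ)| ≤ ‖α k₀‖ + ‖∑ i, (μ i : ℂ) * ((S' i k₀ : ℂ))‖ := by
        calc |(ν k₀ : ℝ)| = ‖(ν k₀ : ℂ)‖ := by rw [Complex.norm_intCast]
          _ = ‖α k₀ - ∑ i, (μ i : ℂ) * ((S' i k₀ : ℂ))‖ := by rw [hν']
          _ ≤ ‖α k₀‖ + ‖∑ i, (μ i : ℂ) * ((S' i k₀ : ℂ))‖ := norm_sub_le _ _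
      have h3 : R * ‖μ‖ - c₅ * ‖μ‖ ≤ ‖α k₀‖ := by linarith
      rw [hRdef] at h3
      nlinarith
    calc ‖α‖ ≥ ‖α k₀‖ := norm_le_pi_norm α k₀
      _ ≥ 1 := hlow
      _ ≥ min ((|(D:ℝ)| * c₆ ^ e)⁻¹) 1 * Real.exp (-(e:ℝ) * ‖μ‖) := by
          have h1 : min ((|(D:ℝ)| * c₆ ^ e)⁻¹) 1 ≤ 1 := min_le_right _ _
          have h2 : (0:ℝ) < min ((|(D:ℝ)| * c₆ ^ e)⁻¹) 1 := lt_min hPpos one_pos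
          nlinarith [Real.exp_pos (-(e:ℝ) * ‖μ‖)]

open NumberField

/-- Corollary 4.4.  Let `K` be a number field of degree
`n = s + 2t` (`s, t ≥ 1`), with real embeddings `σ₁, …, σ_s` and complex
embeddings `σ_{s+1}, …, σ_{s+t}` (one from each conjugate pair), and let
`σ : 𝒪_K → ℂ^{s+t}` be `x ↦ (σ₁(x), …, σ_{s+t}(x))`.  Then `σ(𝒪_K)` is a
lattice of rank `n`, and there are `T ∈ GL_{s+t}(ℂ)` and an `(s+t) × t`
matrix `S` with algebraic entries such that `T(σ(𝒪_K))` is the group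
generated by the columns of `(I_{s+t} S)`, and constants `C > 0`, `a ≥ 0`
with `‖ᵗμ S + ᵗν‖ ≥ C exp(−a|μ|)` for all nonzero `μ ∈ ℤ^{s+t}` and all
`ν ∈ ℤᵗ`. -/
theorem stmt3 (K : Type*) [Field K] [NumberField K]
    (s t : ℕ) (hs : 1 ≤ s) (ht : 1 ≤ t)
    (hn : Module.finrank ℚ K = s + 2 * t)
    (σr : Fin s → (K →+* ℂ)) (σc : Fin t → (K →+* ℂ))
    (hreal : ∀ i, ComplexEmbedding.IsReal (σr i))
    (hcomplex : ∀ j, ¬ ComplexEmbedding.IsReal (σc j))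
    (henum : Function.Bijective
      (Sum.elim σr (Sum.elim σc (fun j => ComplexEmbedding.conjugate (σc j)))
        : Fin s ⊕ (Fin t ⊕ Fin t) → (K →+* ℂ)))
    (σmap : 𝓞 K → ((Fin s ⊕ Fin t) → ℂ))
    (hσmap : σmap = fun x : 𝓞 K =>
      Sum.elim (fun i => σr i (x : K)) (fun j => σc j (x : K))) :
    -- `σ(𝒪_K)` is a lattice of rank `n = s + 2t`
    (∃ v : Fin (s + 2 * t) → ((Fin s ⊕ Fin t) → ℂ),
      LinearIndependent ℝ v ∧
      AddSubgroup.closure (Set.range v) = AddSubgroup.closure (Set.range σmap)) ∧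
    -- normal form with algebraic period matrix and the Diophantine condition
    ∃ T : ((Fin s ⊕ Fin t) → ℂ) ≃ₗ[ℂ] ((Fin s ⊕ Fin t) → ℂ),
      ∃ S : Matrix (Fin s ⊕ Fin t) (Fin t) ℂ,
        (∀ i j, IsAlgebraic ℚ (S i j)) ∧
        AddSubgroup.closure (Set.range (fun x : 𝓞 K => T (σmap x))) =
          AddSubgroup.closure (Set.range
            (Sum.elim
              (fun j : Fin s ⊕ Fin t =>
                (Pi.single j 1 : (Fin s ⊕ Fin t) → ℂ))
              (fun k : Fin t => fun i : Fin s ⊕ Fin t => S i k))) ∧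
        ∃ C : ℝ, 0 < C ∧ ∃ a : ℝ, 0 ≤ a ∧
          ∀ μ : (Fin s ⊕ Fin t) → ℤ, μ ≠ 0 → ∀ ν : Fin t → ℤ,
            ‖(fun k : Fin t => ∑ i, (μ i : ℂ) * S i k + (ν k : ℂ))‖ ≥
              C * Real.exp (-a * ‖μ‖) := by
  classical
  haveI ht' : Nonempty (Fin t) := ⟨⟨0, ht⟩⟩
  -- basis of the ring of integers indexed by `Fin (s+2*t)`
  have hcard : Fintype.card (Fin (s + 2*t)) =
      Fintype.card (Module.Free.ChooseBasisIndex ℤ (𝓞 K)) := by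
    rw [Fintype.card_fin, ← Module.finrank_eq_card_chooseBasisIndex,
      RingOfIntegers.rank, hn]
  let idx : Fin (s + 2*t) ≃ Module.Free.ChooseBasisIndex ℤ (𝓞 K) :=
    Fintype.equivOfCardEq hcard
  let bO : Module.Basis (Fin (s + 2*t)) ℤ (𝓞 K) := (RingOfIntegers.basis K).reindex idx.symm
  let bK : Module.Basis (Fin (s + 2*t)) ℚ K := (integralBasis K).reindex idx.symm
  have hbKO : ∀ i, bK i = algebraMap (𝓞 K) K (bO i) := fun i => by
    simp only [bK, bO, Module.Basis.reindex_apply, integralBasis_apply]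
  let uB : Module.Basis (Fin (s + 2*t)) ℂ ((K →+* ℂ) → ℂ) :=
    (canonicalEmbedding.latticeBasis K).reindex idx.symm
  have huB : ∀ i, uB i = canonicalEmbedding K (bK i) := fun i => by
    simp only [uB, bK, Module.Basis.reindex_apply, canonicalEmbedding.latticeBasis_apply]
  let emb : Fin s ⊕ Fin t → (K →+* ℂ) := Sum.elim σr σc
  let π : ((K →+* ℂ) → ℂ) →ₗ[ℂ] ((Fin s ⊕ Fin t) → ℂ) := LinearMap.funLeft ℂ ℂ emb
  let v : Fin (s + 2*t) → ((Fin s ⊕ Fin t) → ℂ) := fun i => π (uB i)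
  have hvj : ∀ i j, v i j = emb j (bK i) := by
    intro i j
    simp only [v, π, LinearMap.funLeft_apply, Function.comp_apply, huB i,
      canonicalEmbedding.apply_at]
  have hv : ∀ i, v i = σmap (bO i) := by
    intro i
    funext j
    rw [hvj i j, hσmap]
    cases j with
    | inl j => simp only [emb, Sum.elim_inl, hbKO i]
    | inr j => simp only [emb, Sum.elim_inr, hbKO i]
  -- ℝ-linear independence of v
  have hvindep : LinearIndependent ℝ v := by
    rw [Fintype.linearIndependent_iff]
    intro r hr
    have hr' : ∀ j, ∑ i, (r i : ℂ) * v i j = 0 := by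
      intro j
      have h := congrFun hr j
      simpa only [Finset.sum_apply, Pi.smul_apply, Pi.zero_apply, Complex.real_smul]
        using h
    have hC : ∀ τ : K →+* ℂ, ∑ i, (r i : ℂ) * τ (bK i) = 0 := by
      intro τ
      obtain ⟨q, rfl⟩ := henum.2 τ
      rcases q with i' | j' | j'
      · simpa only [hvj, emb, Sum.elim_inl] using hr' (Sum.inl i')
      · simpa only [hvj, emb, Sum.elim_inr, Sum.elim_inl] using hr' (Sum.inr j')
      · have h1 : ∑ i, (r i : ℂ) * σc j' (bK i) = 0 := by
          simpa only [hvj, emb, Sum.elim_inr] using hr' (Sum.inr j')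
        have h2 : ∀ i, (ComplexEmbedding.conjugate (σc j')) (bK i) =
            (starRingEnd ℂ) (σc j' (bK i)) := fun i => rfl
        calc ∑ i, (r i : ℂ) * (ComplexEmbedding.conjugate (σc j')) (bK i)
            = ∑ i, (starRingEnd ℂ) ((r i : ℂ) * σc j' (bK i)) := by
              refine Finset.sum_congr rfl fun i _ => ?_
              rw [h2 i, map_mul, Complex.conj_ofReal]
          _ = (starRingEnd ℂ) (∑ i, (r i : ℂ) * σc j' (bK i)) := (map_sum _ _ _).symm
          _ = 0 := by rw [h1, map_zero]
    have huB0 : ∑ i, (r i : ℂ) • uB i = 0 := by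
      funext τ
      have := hC τ
      simp only [Finset.sum_apply, Pi.smul_apply, Pi.zero_apply, smul_eq_mul, huB,
        canonicalEmbedding.apply_at]
      exact this
    have := Fintype.linearIndependent_iff.mp uB.linearIndependent
      (fun i => (r i : ℂ)) huB0
    intro i
    have h2 := this i
    simpa using h2
  -- closure equality for part 1
  have hσadd : ∀ x y : 𝓞 K, σmap (x + y) = σmap x + σmap y := by
    intro x y
    rw [hσmap]
    funext j
    cases j <;> simp [Sum.elim_inl, Sum.elim_inr, map_add]
  have hσzero : σmap 0 = 0 := by
    rw [hσmap]; funext j; cases j <;> simp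
  let σhom : 𝓞 K →+ ((Fin s ⊕ Fin t) → ℂ) :=
    { toFun := σmap, map_zero' := hσzero, map_add' := hσadd }
  have hclos1 : AddSubgroup.closure (Set.range v) =
      AddSubgroup.closure (Set.range σmap) := by
    apply le_antisymm
    · rw [AddSubgroup.closure_le]
      rintro _ ⟨i, rfl⟩
      exact AddSubgroup.subset_closure ⟨bO i, (hv i).symm⟩
    · rw [AddSubgroup.closure_le]
      rintro _ ⟨x, rfl⟩
      have hx : σmap x = ∑ i, bO.repr x i • v i := by
        have h0 : x = ∑ i, bO.repr x i • bO i := (bO.sum_repr x).symm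
        calc σmap x = σhom (∑ i, bO.repr x i • bO i) := by rw [← h0]; rfl
          _ = ∑ i, bO.repr x i • σhom (bO i) := by
              rw [map_sum]
              exact Finset.sum_congr rfl fun i _ => map_zsmul σhom _ _
          _ = ∑ i, bO.repr x i • v i := by
              refine Finset.sum_congr rfl fun i _ => ?_
              rw [hv i]
              rfl
      rw [hx]
      exact AddSubgroup.sum_mem _ fun i _ =>
        AddSubgroup.zsmul_mem _ (AddSubgroup.subset_closure (Set.mem_range_self i)) _
  refine And.intro ⟨v, hvindep, hclos1⟩ ?_
  -- `emb` is injective, so `π` is surjective and the `v i` span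
  have hembinj : Function.Injective emb := by
    have hg : Function.Injective
        (Sum.map (id : Fin s → Fin s) (Sum.inl : Fin t → Fin t ⊕ Fin t)) :=
      Function.Injective.sumMap Function.injective_id Sum.inl_injective
    have hcomp : emb = (Sum.elim σr (Sum.elim σc fun j =>
        ComplexEmbedding.conjugate (σc j))) ∘
        Sum.map (id : Fin s → Fin s) (Sum.inl : Fin t → Fin t ⊕ Fin t) := by
      funext j; cases j <;> rfl
    rw [hcomp]
    exact henum.1.comp hg
  have hπsurj : Function.Surjective π :=
    LinearMap.funLeft_surjective_of_injective ℂ ℂ emb hembinj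
  have hspan : Submodule.span ℂ (Set.range v) = ⊤ := by
    have h1 : Set.range v = π '' Set.range uB := by
      rw [← Set.range_comp]; rfl
    rw [h1, ← Submodule.map_span, uB.span_eq, Submodule.map_top,
      LinearMap.range_eq_top.mpr hπsurj]
  obtain ⟨B, hBsub, -, hBspan, hBindep0⟩ :=
    exists_linearIndepOn_id_extension (linearIndependent_empty ℂ _)
      (Set.empty_subset (Set.range v))
  have hBindep : LinearIndependent ℂ ((↑) : B → ((Fin s ⊕ Fin t) → ℂ)) := hBindep0
  haveI : Fintype B := ((Set.finite_range v).subset hBsub).fintype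
  have hBspan' : Submodule.span ℂ B = ⊤ := by
    rw [eq_top_iff]
    calc ⊤ = Submodule.span ℂ (Set.range v) := hspan.symm
      _ ≤ Submodule.span ℂ (Submodule.span ℂ B : Set _) := Submodule.span_mono hBspan
      _ = Submodule.span ℂ B := Submodule.span_eq _
  let Bb : Module.Basis B ℂ ((Fin s ⊕ Fin t) → ℂ) :=
    Module.Basis.mk hBindep (by rw [Subtype.range_coe]; rw [hBspan'])
  have hBcard : Fintype.card B = s + t := by
    have h1 := Module.finrank_eq_card_basis Bb
    rw [Module.finrank_pi, Fintype.card_sum, Fintype.card_fin, Fintype.card_fin] at h1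
    omega
  let I : Set (Fin (s + 2*t)) := v ⁻¹' B
  haveI : Fintype I := Fintype.ofFinite _
  have hvinj : Function.Injective v := hvindep.injective
  let eqIB : I ≃ B := Equiv.ofBijective (fun i => ⟨v i, i.2⟩) (by
    constructor
    · intro a b hab
      exact Subtype.ext (hvinj (congrArg Subtype.val hab))
    · rintro ⟨b, hb⟩
      obtain ⟨i, rfl⟩ := hBsub hb
      exact ⟨⟨i, hb⟩, rfl⟩)
  have hIcard : Fintype.card I = s + t := by
    rw [← hBcard]; exact Fintype.card_congr eqIB
  let eqc : (Fin s ⊕ Fin t) ≃ I :=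
    Fintype.equivOfCardEq (by rw [Fintype.card_sum, Fintype.card_fin, Fintype.card_fin, hIcard])
  have hIccard : Fintype.card ↥(Iᶜ) = t := by
    rw [Fintype.card_compl_set, hIcard, Fintype.card_fin]; omega
  let eqd : Fin t ≃ ↥(Iᶜ) := Fintype.equivOfCardEq (by rw [hIccard, Fintype.card_fin])
  let w : Fin s ⊕ Fin t → ((Fin s ⊕ Fin t) → ℂ) := fun j => v (eqc j)
  let d : Fin t → Fin (s + 2*t) := fun k => (eqd k : Fin (s + 2*t))
  have hwB : ∀ j, w j ∈ B := fun j => (eqc j).2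
  have hw_indep : LinearIndependent ℂ w := by
    have h1 : w = (Subtype.val : B → _) ∘ (fun j => eqIB (eqc j)) := by
      funext j; rfl
    rw [h1]
    exact hBindep.comp _ ((eqIB.injective).comp eqc.injective)
  have hw_span : ⊤ ≤ Submodule.span ℂ (Set.range w) := by
    have h1 : Set.range w = B := by
      apply Set.eq_of_subset_of_subset
      · rintro _ ⟨j, rfl⟩; exact hwB j
      · intro b hb
        obtain ⟨i0, rfl⟩ := hBsub hb
        refine ⟨eqc.symm ⟨i0, hb⟩, ?_⟩
        show v (eqc (eqc.symm ⟨i0, hb⟩)) = v i0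
        rw [Equiv.apply_symm_apply]
    rw [h1, hBspan']
  let wB : Module.Basis (Fin s ⊕ Fin t) ℂ ((Fin s ⊕ Fin t) → ℂ) := Module.Basis.mk hw_indep hw_span
  let T := wB.equivFun
  -- the number field F containing all the entries
  let F : IntermediateField ℚ ℂ := IntermediateField.adjoin ℚ
    (Set.range fun p : (K →+* ℂ) × Fin (s + 2*t) => p.1 (bK p.2))
  haveI : Finite ↥(Set.range fun p : (K →+* ℂ) × Fin (s + 2*t) => p.1 (bK p.2)) :=
    (Set.finite_range _).to_subtype
  haveI hFfin : FiniteDimensional ℚ F := IntermediateField.finiteDimensional_adjoin (by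
    rintro x ⟨⟨τ, i⟩, rfl⟩
    exact (IsIntegral.of_finite ℚ (bK i)).map τ.toRatAlgHom)
  have hmemF : ∀ (τ : K →+* ℂ) i, τ (bK i) ∈ F := fun τ i =>
    IntermediateField.subset_adjoin ℚ _ ⟨(τ, i), rfl⟩
  have hvF : ∀ i j, v i j ∈ F := fun i j => by rw [hvj]; exact hmemF _ _
  let A : Matrix (Fin s ⊕ Fin t) (Fin s ⊕ Fin t) ℂ := fun j j' => w j' j
  let A' : Matrix (Fin s ⊕ Fin t) (Fin s ⊕ Fin t) F := fun j j' => ⟨w j' j, hvF _ j⟩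
  have hA'map : ∀ j j', algebraMap F ℂ (A' j j') = A j j' := fun j j' => rfl
  have hdetA : IsUnit A.det := by
    have h1 : (Pi.basisFun ℂ (Fin s ⊕ Fin t)).toMatrix w = A := by
      ext j j'
      rw [Module.Basis.toMatrix_apply, Pi.basisFun_repr]
    have h2 := (Module.Basis.is_basis_iff_det (Pi.basisFun ℂ (Fin s ⊕ Fin t))).mp
      ⟨hw_indep, top_le_iff.mp hw_span⟩
    rwa [Module.Basis.det_apply, h1] at h2
  have hdetA' : IsUnit A'.det := by
    rw [isUnit_iff_ne_zero]
    intro h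
    have h1 : algebraMap F ℂ A'.det = A.det := by
      have h2 : (A'.map (algebraMap F ℂ)) = A := by
        ext j j'; exact hA'map j j'
      rw [← h2]
      exact RingHom.map_det (algebraMap F ℂ) A'
    rw [h, map_zero] at h1
    exact (isUnit_iff_ne_zero.mp hdetA) h1.symm
  let y' : Fin t → (Fin s ⊕ Fin t) → F := fun k j => ⟨v (d k) j, hvF _ _⟩
  let S' : Matrix (Fin s ⊕ Fin t) (Fin t) F := fun i k => (A'⁻¹.mulVec (y' k)) i
  have hAS : ∀ k, A.mulVec (fun i => ((S' i k : ℂ))) = v (d k) := by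
    intro k
    have h1 : A'.mulVec (fun i => S' i k) = y' k := by
      show A'.mulVec (A'⁻¹.mulVec (y' k)) = y' k
      rw [Matrix.mulVec_mulVec, Matrix.mul_nonsing_inv _ hdetA', Matrix.one_mulVec]
    funext j
    have h2 := congrArg (algebraMap F ℂ) (congrFun h1 j)
    simp only [Matrix.mulVec, dotProduct, map_sum, map_mul] at h2 ⊢
    convert h2 using 1
    all_goals rfl
  have hTS : ∀ k, T (v (d k)) = fun i => ((S' i k : ℂ)) := by
    intro k
    have h1 : T.symm (fun i => ((S' i k : ℂ))) = v (d k) := by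
      rw [Module.Basis.equivFun_symm_apply]
      funext j
      rw [Finset.sum_apply]
      have h2 := congrFun (hAS k) j
      simp only [Matrix.mulVec, dotProduct] at h2
      rw [← h2]
      refine Finset.sum_congr rfl fun i _ => ?_
      have h3 : wB i = w i := Module.Basis.mk_apply hw_indep hw_span i
      rw [Pi.smul_apply, h3, smul_eq_mul, mul_comm]
    rw [← h1, LinearEquiv.apply_symm_apply]
  have hTw : ∀ j, T (w j) = Pi.single j 1 := by
    intro j
    have h3 : wB j = w j := Module.Basis.mk_apply hw_indep hw_span j
    have h4 : T (w j) = wB.equivFun (wB j) := by rw [h3]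
    rw [h4]
    funext i
    rw [Module.Basis.equivFun_self, Pi.single_apply]
    exact if_congr eq_comm rfl rfl
  -- the data
  refine ⟨T, fun i k => ((S' i k : ℂ)), ?_, ?_, ?_⟩
  · -- algebraicity
    intro i k
    exact ((IsIntegral.of_finite ℚ (S' i k)).map F.val).isAlgebraic
  · -- closure equality
    let f : ((Fin s ⊕ Fin t) → ℂ) →+ ((Fin s ⊕ Fin t) → ℂ) := T.toLinearMap.toAddMonoidHom
    have hf : ∀ z, f z = T z := fun z => rfl
    have hr1 : Set.range (fun x : 𝓞 K => T (σmap x)) = ⇑f '' Set.range σmap := by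
      rw [← Set.range_comp]; rfl
    have hr2 : ⇑f '' Set.range v = Set.range (fun i => T (v i)) := by
      rw [← Set.range_comp]; rfl
    have hrange : Set.range (fun i => T (v i)) = Set.range
        (Sum.elim (fun j : Fin s ⊕ Fin t => (Pi.single j 1 : (Fin s ⊕ Fin t) → ℂ))
          (fun k : Fin t => fun i : Fin s ⊕ Fin t => ((S' i k : ℂ)))) := by
      apply Set.eq_of_subset_of_subset
      · rintro _ ⟨i, rfl⟩
        by_cases hi : i ∈ I
        · refine ⟨Sum.inl (eqc.symm ⟨i, hi⟩), ?_⟩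
          have h5 : w (eqc.symm ⟨i, hi⟩) = v i := by
            show v ((eqc (eqc.symm ⟨i, hi⟩) : I) : Fin (s+2*t)) = v i
            rw [Equiv.apply_symm_apply]
          rw [Sum.elim_inl, ← hTw _, h5]
        · refine ⟨Sum.inr (eqd.symm ⟨i, hi⟩), ?_⟩
          have h5 : d (eqd.symm ⟨i, hi⟩) = i := by
            show ((eqd (eqd.symm ⟨i, hi⟩) : ↥(Iᶜ)) : Fin (s+2*t)) = i
            rw [Equiv.apply_symm_apply]
          rw [Sum.elim_inr, ← hTS _, h5]
      · rintro _ ⟨q, rfl⟩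
        cases q with
        | inl j =>
            refine ⟨(eqc j : Fin (s+2*t)), ?_⟩
            rw [Sum.elim_inl, ← hTw j]
        | inr k =>
            refine ⟨d k, ?_⟩
            rw [Sum.elim_inr, ← hTS k]
    calc AddSubgroup.closure (Set.range fun x : 𝓞 K => T (σmap x))
        = AddSubgroup.closure (⇑f '' Set.range σmap) := by rw [hr1]
      _ = AddSubgroup.map f (AddSubgroup.closure (Set.range σmap)) :=
          (AddMonoidHom.map_closure f _).symm
      _ = AddSubgroup.map f (AddSubgroup.closure (Set.range v)) := by rw [hclos1]
      _ = AddSubgroup.closure (⇑f '' Set.range v) := AddMonoidHom.map_closure f _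
      _ = AddSubgroup.closure (Set.range (fun i => T (v i))) := by rw [hr2]
      _ = _ := by rw [hrange]
  · -- Diophantine condition
    let embA : Fin s ⊕ (Fin t ⊕ Fin t) → (K →+* ℂ) :=
      Sum.elim σr (Sum.elim σc fun j => ComplexEmbedding.conjugate (σc j))
    have hNV : ∀ μ : (Fin s ⊕ Fin t) → ℤ, μ ≠ 0 → ∀ ν : Fin t → ℤ,
        (fun k : Fin t => ∑ i, (μ i : ℂ) * ((S' i k : ℂ)) + (ν k : ℂ)) ≠ 0 := by
      intro μ hμ ν hzero
      have hz0 : ∀ k, ∑ i, (μ i : ℂ) * ((S' i k : ℂ)) = -(ν k : ℂ) := by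
        intro k
        have h1 := congrFun hzero k
        simp only [Pi.zero_apply] at h1
        linear_combination h1
      -- the linear functional `φ`
      let dot : ((Fin s ⊕ Fin t) → ℂ) →ₗ[ℂ] ℂ := ∑ i, (μ i : ℂ) • LinearMap.proj i
      have hdot : ∀ z, dot z = ∑ i, (μ i : ℂ) * z i := by
        intro z
        simp only [dot, LinearMap.sum_apply, LinearMap.smul_apply, LinearMap.proj_apply,
          smul_eq_mul]
      let φ : ((Fin s ⊕ Fin t) → ℂ) →ₗ[ℂ] ℂ := dot ∘ₗ T.toLinearMap
      have hφw : ∀ j, φ (w j) = (μ j : ℂ) := by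
        intro j
        show dot (T (w j)) = _
        rw [hTw j, hdot]
        simp [Pi.single_apply]
      have hφd : ∀ k, φ (v (d k)) = -(ν k : ℂ) := by
        intro k
        show dot (T (v (d k))) = _
        rw [hTS k, hdot, hz0 k]
      have hφv : ∀ q, ∃ z : ℤ, φ (v q) = (z : ℂ) := by
        intro q
        by_cases hq : q ∈ I
        · refine ⟨μ (eqc.symm ⟨q, hq⟩), ?_⟩
          have h5 : w (eqc.symm ⟨q, hq⟩) = v q := by
            show v ((eqc (eqc.symm ⟨q, hq⟩) : I) : Fin (s+2*t)) = v q
            rw [Equiv.apply_symm_apply]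
          rw [← h5, hφw]
        · refine ⟨-ν (eqd.symm ⟨q, hq⟩), ?_⟩
          have h5 : d (eqd.symm ⟨q, hq⟩) = q := by
            show ((eqd (eqd.symm ⟨q, hq⟩) : ↥(Iᶜ)) : Fin (s+2*t)) = q
            rw [Equiv.apply_symm_apply]
          have h6 := hφd (eqd.symm ⟨q, hq⟩)
          rw [h5] at h6
          rw [h6]
          push_cast
          ring
      -- `ℓ` as a ℚ-linear functional on K
      let canA : K →ₐ[ℚ] ((K →+* ℂ) → ℂ) := (canonicalEmbedding K).toRatAlgHom
      let ℓ : K →ₗ[ℚ] ℂ := (φ.restrictScalars ℚ) ∘ₗ (π.restrictScalars ℚ) ∘ₗ canA.toLinearMap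
      have hℓ : ∀ x, ℓ x = φ (π (canonicalEmbedding K x)) := fun x => rfl
      have hℓbK : ∀ q, ℓ (bK q) = φ (v q) := by
        intro q
        rw [hℓ]
        congr 1
        show π (canonicalEmbedding K (bK q)) = π (uB q)
        rw [huB q]
      choose zq hzq using hφv
      let ψ : K →ₗ[ℚ] ℚ := bK.constr ℚ (fun q => (zq q : ℚ))
      have hψ : ∀ x, (algebraMap ℚ ℂ) (ψ x) = ℓ x := by
        have h6 : (Algebra.linearMap ℚ ℂ) ∘ₗ ψ = ℓ := by
          apply bK.ext
          intro q
          simp only [LinearMap.comp_apply, Algebra.linearMap_apply, ψ]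
          rw [Module.Basis.constr_basis, hℓbK q, hzq q]
          push_cast
          rfl
        intro x
        exact LinearMap.congr_fun h6 x
      -- the element `aK` representing `ψ` via the trace form
      have hnd := traceForm_nondegenerate ℚ K
      let dB := (Algebra.traceForm ℚ K).dualBasis hnd bK
      let aK : K := ∑ q, ψ (bK q) • dB q
      have htr : ∀ x : K, Algebra.trace ℚ K (aK * x) = ψ x := by
        have h7 : ∀ j, (Algebra.traceForm ℚ K aK) (bK j) = ψ (bK j) := by
          intro j
          have h8 : Algebra.traceForm ℚ K aK =
              ∑ q, ψ (bK q) • (Algebra.traceForm ℚ K (dB q)) := by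
            rw [map_sum]
            exact Finset.sum_congr rfl fun q _ => by rw [map_smul]
          rw [h8]
          rw [LinearMap.sum_apply]
          have h9 : ∀ q, (ψ (bK q) • Algebra.traceForm ℚ K (dB q)) (bK j)
              = ψ (bK q) * (if j = q then 1 else 0) := by
            intro q
            rw [LinearMap.smul_apply, smul_eq_mul]
            congr 1
            exact (Algebra.traceForm ℚ K).apply_dualBasis_left hnd bK q j
          rw [Finset.sum_congr rfl fun q _ => h9 q]
          simp [Finset.sum_ite_eq]
        intro x
        have h10 : (Algebra.traceForm ℚ K aK : K →ₗ[ℚ] ℚ) = ψ := bK.ext h7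
        have h11 := LinearMap.congr_fun h10 x
        rwa [Algebra.traceForm_apply] at h11
      -- expansion of φ over coordinates
      have hφz : ∀ z : (Fin s ⊕ Fin t) → ℂ, φ z = ∑ j, z j * φ (Pi.single j 1) := by
        intro z
        calc φ z = φ (∑ j, Pi.single j (z j)) := congrArg φ (Finset.univ_sum_single z).symm
          _ = ∑ j, φ (Pi.single j (z j)) := map_sum φ _ _
          _ = ∑ j, z j * φ (Pi.single j 1) := by
              refine Finset.sum_congr rfl fun j _ => ?_
              have h2 : (Pi.single j (z j) : (Fin s ⊕ Fin t) → ℂ) = z j • (Pi.single j 1 : (Fin s ⊕ Fin t) → ℂ) := by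
                funext i
                simp only [Pi.smul_apply, Pi.single_apply, smul_eq_mul]
                by_cases h : i = j <;> simp [h]
              rw [h2, map_smul, smul_eq_mul]
      let cc : (Fin s ⊕ Fin t) → ℂ := fun j => φ (Pi.single j 1)
      have hℓx : ∀ x : K, ℓ x = ∑ j, emb j x * cc j := by
        intro x
        rw [hℓ, hφz]
        rfl
      have hcomb : ∀ x : K, ∑ j, emb j x * cc j = ∑ τ : K →ₐ[ℚ] ℂ, τ aK * τ x := by
        intro x
        have h12 : (algebraMap ℚ ℂ) (Algebra.trace ℚ K (aK * x)) =
            ∑ τ : K →ₐ[ℚ] ℂ, τ aK * τ x := by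
          rw [trace_eq_sum_embeddings (K := ℚ) (L := K) ℂ]
          exact Finset.sum_congr rfl fun τ _ => map_mul τ aK x
        rw [← hℓx, ← hψ, ← h12, htr x]
      -- reindex over all embeddings
      let Eall : (Fin s ⊕ (Fin t ⊕ Fin t)) ≃ (K →ₐ[ℚ] ℂ) :=
        (Equiv.ofBijective embA henum).trans (RingHom.equivRatAlgHom K ℂ)
      have hEall : ∀ q x, (Eall q) x = embA q x := by
        intro q x
        show (RingHom.equivRatAlgHom K ℂ (embA q)) x = embA q x
        rw [RingHom.equivRatAlgHom_apply]
        rfl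
      let ccext : (Fin s ⊕ (Fin t ⊕ Fin t)) → ℂ :=
        Sum.elim (fun i => cc (Sum.inl i)) (Sum.elim (fun j => cc (Sum.inr j)) (fun _ => 0))
      let G : (Fin s ⊕ (Fin t ⊕ Fin t)) → ℂ := fun q => ccext q - (Eall q) aK
      have hGsum : ∀ x : K, ∑ q, G q * embA q x = 0 := by
        intro x
        have h13 : ∑ q, ccext q * embA q x = ∑ j, emb j x * cc j := by
          rw [Fintype.sum_sum_type, Fintype.sum_sum_type, Fintype.sum_sum_type]
          simp only [ccext, embA, emb, Sum.elim_inl, Sum.elim_inr, zero_mul,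
            Finset.sum_const_zero, add_zero]
          congr 1
          · exact Finset.sum_congr rfl fun i _ => mul_comm _ _
          · exact Finset.sum_congr rfl fun j _ => mul_comm _ _
        have h14 : ∑ q, (Eall q) aK * embA q x = ∑ τ : K →ₐ[ℚ] ℂ, τ aK * τ x := by
          refine Fintype.sum_equiv Eall _ _ fun q => ?_
          rw [hEall q x]
        calc ∑ q, G q * embA q x
            = ∑ q, (ccext q * embA q x - (Eall q) aK * embA q x) := by
              refine Finset.sum_congr rfl fun q _ => ?_
              rw [sub_mul]
          _ = (∑ q, ccext q * embA q x) - ∑ q, (Eall q) aK * embA q x :=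
              Finset.sum_sub_distrib _ _
          _ = 0 := by rw [h13, h14, hcomb x, sub_self]
      -- linear independence of characters
      have hmqinj : Function.Injective (fun q => (embA q).toMonoidHom) := by
        intro q1 q2 h
        apply henum.1
        ext x
        exact congrFun (congrArg (fun f : K →* ℂ => (f : K → ℂ)) h) x
      have hlin : LinearIndependent ℂ (fun q => ((embA q).toMonoidHom : K → ℂ)) :=
        (linearIndependent_monoidHom K ℂ).comp _ hmqinj
      have hG0 : ∀ q, G q = 0 := by
        refine Fintype.linearIndependent_iff.mp hlin G ?_
        funext x
        rw [Finset.sum_apply]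
        simp only [Pi.smul_apply, smul_eq_mul]
        rw [Pi.zero_apply]
        exact hGsum x
      -- conclude aK = 0, then cc = 0, then μ = 0
      have haK : aK = 0 := by
        have h15 := hG0 (Sum.inr (Sum.inr ⟨0, ht⟩))
        simp only [G, ccext, Sum.elim_inr, zero_sub, neg_eq_zero] at h15
        have h16 : (Eall (Sum.inr (Sum.inr ⟨0, ht⟩))) aK = 0 := h15
        rw [hEall] at h16
        have h17 : embA (Sum.inr (Sum.inr ⟨0, ht⟩)) =
            ComplexEmbedding.conjugate (σc ⟨0, ht⟩) := rfl
        rw [h17] at h16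
        exact (map_eq_zero _).mp h16
      have hcc : ∀ j, cc j = 0 := by
        intro j
        cases j with
        | inl i =>
            have h18 := hG0 (Sum.inl i)
            simp only [G, ccext, Sum.elim_inl, haK, map_zero, sub_zero] at h18
            exact h18
        | inr j =>
            have h18 := hG0 (Sum.inr (Sum.inl j))
            simp only [G, ccext, Sum.elim_inr, Sum.elim_inl, haK, map_zero, sub_zero] at h18
            exact h18
      have hμ0 : ∀ j, (μ j : ℂ) = 0 := by
        intro j
        rw [← hφw j, hφz]
        refine Finset.sum_eq_zero fun i _ => ?_
        rw [show φ (Pi.single i 1) = cc i from rfl, hcc i, mul_zero]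
      apply hμ
      funext j
      have := hμ0 j
      exact_mod_cast this
    obtain ⟨C, hC, a, ha, hbound⟩ := aux_liou F S' hNV
    exact ⟨C, hC, a, ha, fun μ hμ ν => hbound μ hμ ν⟩
end

section
/- Let n, m be integers with 1 ≤ m ≤ n and let S be an n×m complex matrix such that the n+m columns of the matrix (Iₙ S) are linearly independent over ℝ; let Λ ⊆ ℂⁿ be the additive subgroup generated by these columns. Then every Λ-periodic holomorphic function ℂⁿ → ℂ is constant if and only if ᵗσS ∉ ℤᵐ for every σ ∈ ℤⁿ \ {0}. -/
open MeasureTheory Complex Real intervalIntegral AddCircle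



lemma shift1 (g : ℂ → ℂ) (hg : Differentiable ℂ g) (hp : ∀ w, g (w + 1) = g w) (c : ℂ) :
    ∫ x in (0:ℝ)..1, g (x + c) = ∫ x in (0:ℝ)..1, g x := by
  set G : ℝ → ℂ := fun t : ℝ => g (t + c.im * I) with hGdef
  have hG : Function.Periodic G 1 := by
    intro t
    simp only [hGdef, Complex.ofReal_add, Complex.ofReal_one]
    rw [show ((t:ℂ) + 1 + c.im * I) = ((t:ℂ) + c.im * I) + 1 by ring, hp]
  have step_a : ∫ x in (0:ℝ)..1, g (x + c) = ∫ x in (0:ℝ)..1, G x := by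
    have e1 : ∀ x : ℝ, g (x + c) = G (x + c.re) := by
      intro x
      simp only [hGdef, Complex.ofReal_add]
      rw [add_assoc, Complex.re_add_im c]
    have e2 : ∫ x in (0:ℝ)..1, G (x + c.re) = ∫ x in (0:ℝ)+c.re..1+c.re, G x :=
      intervalIntegral.integral_comp_add_right G c.re
    have e3 := hG.intervalIntegral_add_eq c.re 0
    simp_rw [e1]
    rw [e2, zero_add, add_comm (1:ℝ) c.re, e3, zero_add]
  have step_b : ∫ x in (0:ℝ)..1, G x = ∫ x in (0:ℝ)..1, g x := by
    have H := Complex.integral_boundary_rect_eq_zero_of_differentiableOn g 0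
      (1 + c.im * I) (hg.differentiableOn)
    have hre : (0:ℂ).re = 0 := rfl
    have him : (0:ℂ).im = 0 := rfl
    have hre1 : (1 + (c.im:ℂ) * I).re = 1 := by simp
    have him1 : (1 + (c.im:ℂ) * I).im = c.im := by simp
    rw [hre, him, hre1, him1] at H
    have hv : ∀ y : ℝ, g ((1:ℝ) + y * I) = g ((0:ℝ) + y * I) := by
      intro y
      rw [show ((1:ℝ):ℂ) + y * I = ((0:ℝ) + y * I) + 1 by push_cast; ring, hp]
    simp_rw [hv] at H
    have h0 : ∀ x : ℝ, g ((x:ℝ) + ((0:ℝ):ℂ) * I) = g x := by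
      intro x; norm_num
    simp_rw [h0] at H
    have : ∫ x in (0:ℝ)..1, G x = ∫ x in (0:ℝ)..1, g ((x:ℝ) + (c.im:ℂ) * I) := rfl
    rw [this]
    linear_combination -H
  rw [step_a, step_b]


lemma unique1 (f : ℝ → ℂ) (hf : Continuous f) (hp : Function.Periodic f 1)
    (h : ∀ t : ℤ, (∫ x in (0:ℝ)..1, f x * Complex.exp (-(2 * π * I * t * x))) = 0) :
    ∀ x, f x = 0 := by
  haveI : Fact (0 < (1:ℝ)) := ⟨one_pos⟩
  set u : AddCircle (1:ℝ) → ℂ := hp.lift with hu_def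
  have hu : Continuous u :=
    hf.quotient_liftOn' fun a b h' => by
      rw [QuotientAddGroup.leftRel_apply] at h'
      obtain ⟨k, hk⟩ := h'
      exact (hp.zsmul k _).symm.trans (congr_arg f (add_eq_of_eq_neg_add hk))
  have hcoeff : ∀ t : ℤ, fourierCoeff u t = 0 := by
    intro t
    rw [fourierCoeff_eq_intervalIntegral u t 0]
    rw [show (0:ℝ) + 1 = 1 by ring]
    have key : ∀ x : ℝ, (fourier (T := (1:ℝ)) (-t) ((x : ℝ) : AddCircle (1:ℝ)))
        • u ((x : ℝ) : AddCircle (1:ℝ))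
        = f x * Complex.exp (-(2 * π * I * t * x)) := by
      intro x
      rw [fourier_coe_apply]
      rw [show u ((x : ℝ) : AddCircle (1:ℝ)) = f x from hp.lift_coe x, smul_eq_mul, mul_comm]
      congr 1
      push_cast
      ring_nf
    simp_rw [key, h t, smul_zero]
  set F : C(AddCircle (1:ℝ), ℂ) := ⟨u, hu⟩ with hF
  have hLp : ContinuousMap.toLp (E := ℂ) 2 haarAddCircle ℂ F = 0 := by
    apply fourierBasis.repr.map_eq_zero_iff.mp
    ext i
    rw [fourierBasis_repr, fourierCoeff_toLp]
    simp; exact hcoeff i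
  have hae : (F : AddCircle (1:ℝ) → ℂ) =ᵐ[@haarAddCircle 1 _] 0 := by
    have h1 := ContinuousMap.coeFn_toLp (E := ℂ) (p := 2) (μ := @haarAddCircle 1 _) (𝕜 := ℂ) F
    rw [hLp] at h1
    exact h1.symm.trans (Lp.coeFn_zero _ _ _)
  have hzero : (F : AddCircle (1:ℝ) → ℂ) = 0 :=
    (Continuous.ae_eq_iff_eq (μ := @haarAddCircle 1 _) F.continuous continuous_zero).mp hae
  intro x
  rw [← hp.lift_coe x]
  simpa [hF, hu_def] using congr_fun hzero ((x : ℝ) : AddCircle (1:ℝ))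


noncomputable def boxMeasure (k : ℕ) : Measure (Fin k → ℝ) :=
  Measure.pi fun _ => volume.restrict (Set.Ioc 0 1)

instance (k : ℕ) : IsProbabilityMeasure (boxMeasure k) := by
  have : IsProbabilityMeasure ((volume : Measure ℝ).restrict (Set.Ioc 0 1)) := by
    constructor
    rw [Measure.restrict_apply MeasurableSet.univ, Set.univ_inter, Real.volume_Ioc]
    norm_num
  exact MeasureTheory.Measure.pi.instIsProbabilityMeasure _

lemma boxMeasure_ae_mem (k : ℕ) :
    ∀ᵐ x ∂(boxMeasure k), ∀ i, x i ∈ Set.Ioc (0:ℝ) 1 := by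
  have hnull : boxMeasure k {x | ¬ ∀ i, x i ∈ Set.Ioc (0:ℝ) 1} = 0 := by
    have : {x : Fin k → ℝ | ¬ ∀ i, x i ∈ Set.Ioc (0:ℝ) 1}
        = ⋃ i, Function.eval i ⁻¹' (Set.Ioc (0:ℝ) 1)ᶜ := by
      ext x; simp [Function.eval]
    rw [this]
    refine measure_iUnion_null fun i => ?_
    refine Measure.pi_eval_preimage_null _ ?_
    rw [Measure.restrict_apply (measurableSet_Ioc.compl), Set.compl_inter_self]
    simp
  exact (ae_iff).mpr hnull

lemma boxMeasure_integrable {k : ℕ} {E : Type*} [NormedAddCommGroup E]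
    (f : (Fin k → ℝ) → E) (hf : Continuous f) : Integrable f (boxMeasure k) := by
  obtain ⟨C, hC⟩ : ∃ C, ∀ x ∈ Set.pi Set.univ (fun _ : Fin k => Set.Icc (0:ℝ) 1), ‖f x‖ ≤ C := by
    rcases (isCompact_univ_pi fun _ : Fin k => isCompact_Icc).exists_bound_of_continuousOn
      hf.continuousOn with ⟨C, hC⟩
    exact ⟨C, hC⟩
  refine (integrable_const C).mono' hf.aestronglyMeasurable ?_
  filter_upwards [boxMeasure_ae_mem k] with x hx
  exact hC x fun i _ => Set.Ioc_subset_Icc_self (hx i)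

lemma boxMeasure_peel {n : ℕ} (j : Fin (n + 1)) (f : (Fin (n + 1) → ℝ) → ℂ)
    (hf : Continuous f) :
    ∫ x, f x ∂(boxMeasure (n + 1))
      = ∫ y, (∫ t in (0:ℝ)..1, f (Fin.insertNth j t y)) ∂(boxMeasure n) := by
  have h := measurePreserving_piFinSuccAbove
    (fun _ : Fin (n + 1) => (volume : Measure ℝ).restrict (Set.Ioc 0 1)) j
  set e := MeasurableEquiv.piFinSuccAbove (fun _ : Fin (n + 1) => ℝ) j with he
  have h1 : ∫ x, f x ∂(boxMeasure (n + 1))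
      = ∫ z, f (e.symm z) ∂(((volume : Measure ℝ).restrict (Set.Ioc 0 1)).prod (boxMeasure n)) := by
    exact (MeasurePreserving.integral_comp h.symm e.symm.measurableEmbedding f).symm
  rw [h1]
  have hint : Integrable (fun z => f (e.symm z))
      (((volume : Measure ℝ).restrict (Set.Ioc 0 1)).prod (boxMeasure n)) :=
    (MeasurePreserving.integrable_comp_emb h.symm e.symm.measurableEmbedding).mpr
      (boxMeasure_integrable f hf)
  rw [MeasureTheory.integral_prod_symm _ hint]
  refine integral_congr_ae (Filter.Eventually.of_forall fun y => ?_)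
  show ∫ x in Set.Ioc (0:ℝ) 1, f (e.symm (x, y)) = ∫ t in (0:ℝ)..1, f (j.insertNth t y)
  rw [intervalIntegral.integral_of_le zero_le_one]
  refine integral_congr_ae (Filter.Eventually.of_forall fun t => ?_)
  simp [he, MeasurableEquiv.piFinSuccAbove_symm_apply, Fin.insertNthEquiv]


/-- coercion of a real vector to a complex vector -/
def cofr {N : ℕ} (x : Fin N → ℝ) : Fin N → ℂ := fun i => (x i : ℂ)

noncomputable def boxInt {N : ℕ} (g : (Fin N → ℂ) → ℂ) (σ : Fin N → ℤ) (c : Fin N → ℂ) : ℂ :=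
  ∫ x, g (cofr x + c)
      * Complex.exp (-(2 * π * I * (∑ i, (σ i : ℂ) * (x i : ℂ)))) ∂(boxMeasure N)

lemma update_add_single {N : ℕ} (v : Fin N → ℂ) (j : Fin N) (ζ : ℂ) :
    Function.update v j ζ + Pi.single j (1:ℂ) = Function.update v j (ζ + 1) := by
  funext i
  by_cases hij : i = j
  · subst hij; simp
  · simp [Function.update_of_ne hij, Pi.single_eq_of_ne hij]

lemma slice_diff {N : ℕ} (g : (Fin N → ℂ) → ℂ) (hg : Differentiable ℂ g)
    (v : Fin N → ℂ) (j : Fin N) : Differentiable ℂ (fun ζ => g (Function.update v j ζ)) := by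
  have h1 : (fun ζ : ℂ => Function.update v j ζ)
      = fun ζ : ℂ => v + (ζ - v j) • (Pi.single j (1:ℂ) : Fin N → ℂ) := by
    funext ζ i
    by_cases hij : i = j
    · subst hij; simp
    · simp [Function.update_of_ne hij, Pi.single_eq_of_ne hij]
  have : Differentiable ℂ (fun ζ : ℂ => Function.update v j ζ) := by
    rw [h1]
    exact (((differentiable_id.sub_const (v j)).smul_const
      ((Pi.single j (1:ℂ) : Fin N → ℂ)))).const_add v
  exact hg.comp this

lemma insertNth_coe_add {n : ℕ} (j : Fin (n + 1)) (t : ℝ) (y : Fin n → ℝ) (c : Fin (n+1) → ℂ) :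
    (cofr (Fin.insertNth j t y) + c)
      = Function.update (cofr (Fin.insertNth j (0:ℝ) y) + c) j ((t:ℂ) + c j) := by
  funext i
  by_cases hij : i = j
  · subst hij; simp [cofr]
  · obtain ⟨i', rfl⟩ := Fin.exists_succAbove_eq hij
    simp [cofr, Function.update_of_ne hij, Fin.insertNth_apply_succAbove]

lemma sum_insertNth {n : ℕ} (j : Fin (n + 1)) (σ : Fin (n+1) → ℤ) (t : ℝ) (y : Fin n → ℝ) :
    (∑ i, (σ i : ℂ) * ((Fin.insertNth j t y : Fin (n+1) → ℝ) i : ℂ))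
      = (σ j : ℂ) * t + ∑ i', (σ (j.succAbove i') : ℂ) * (y i' : ℂ) := by
  rw [Fin.sum_univ_succAbove _ j]
  simp [Fin.insertNth_apply_succAbove]

lemma boxInt_single_shift {n : ℕ} (g : (Fin (n+1) → ℂ) → ℂ) (hg : Differentiable ℂ g)
    (hper : ∀ j : Fin (n+1), ∀ z, g (z + Pi.single j 1) = g z)
    (σ : Fin (n+1) → ℤ) (c : Fin (n+1) → ℂ) (j : Fin (n+1)) (w : ℂ) :
    boxInt g σ (c + Pi.single j w)
      = Complex.exp (2 * π * I * (σ j : ℂ) * w) * boxInt g σ c := by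
  have hgc : Continuous g := hg.continuous
  have hcont : ∀ c' : Fin (n+1) → ℂ, Continuous fun x : Fin (n+1) → ℝ =>
      g (cofr x + c')
        * Complex.exp (-(2 * π * I * (∑ i, (σ i : ℂ) * (x i : ℂ)))) := by
    intro c'
    apply Continuous.mul
    · exact hgc.comp ((continuous_pi fun i =>
        (Complex.continuous_ofReal.comp (continuous_apply i))).add continuous_const)
    · exact Complex.continuous_exp.comp (by fun_prop)
  rw [boxInt, boxInt, boxMeasure_peel j _ (hcont _), boxMeasure_peel j _ (hcont c)]
  rw [← MeasureTheory.integral_const_mul]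
  refine integral_congr_ae (Filter.Eventually.of_forall fun y => ?_)
  simp only []
  set V : Fin (n+1) → ℂ := cofr (Fin.insertNth j (0:ℝ) y) + c with hV
  set h : ℂ → ℂ := fun ζ => g (Function.update V j ζ)
      * Complex.exp (-(2 * π * I * (σ j : ℂ) * ζ)) with hh
  have hhd : Differentiable ℂ h := by
    apply Differentiable.mul (slice_diff g hg V j)
    apply Complex.differentiable_exp.comp
    fun_prop
  have hhp : ∀ ζ, h (ζ + 1) = h ζ := by
    intro ζ
    simp only [hh]
    rw [← update_add_single, hper j]
    congr 1
    rw [show -(2 * π * I * (σ j : ℂ) * (ζ+1)) = -(2 * π * I * (σ j : ℂ) * ζ)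
      + ((-(σ j) : ℤ) : ℂ) * (2 * π * I) by push_cast; ring]
    rw [Complex.exp_add, Complex.exp_int_mul_two_pi_mul_I, mul_one]
  have key : ∀ d : ℂ, (∫ t in (0:ℝ)..1, g (cofr (Fin.insertNth j t y) + (c + Pi.single j d))
        * Complex.exp (-(2 * π * I * (∑ i, (σ i : ℂ) * ((Fin.insertNth j t y : Fin (n+1) → ℝ) i : ℂ)))))
      = Complex.exp (2 * π * I * (σ j : ℂ) * (c j + d))
        * Complex.exp (-(2 * π * I * (∑ i', (σ (j.succAbove i') : ℂ) * (y i' : ℂ))))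
        * ∫ t in (0:ℝ)..1, h t := by
    intro d
    have e1 : ∀ t : ℝ, g (cofr (Fin.insertNth j t y) + (c + Pi.single j d))
        * Complex.exp (-(2 * π * I * (∑ i, (σ i : ℂ) * ((Fin.insertNth j t y : Fin (n+1) → ℝ) i : ℂ))))
        = Complex.exp (2 * π * I * (σ j : ℂ) * (c j + d))
          * Complex.exp (-(2 * π * I * (∑ i', (σ (j.succAbove i') : ℂ) * (y i' : ℂ))))
          * h ((t : ℂ) + (c j + d)) := by
      intro t
      have u1 : cofr (Fin.insertNth j t y) + (c + Pi.single j d)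
          = Function.update V j ((t:ℂ) + (c j + d)) := by
        funext i
        by_cases hij : i = j
        · subst hij
          simp only [Function.update_self, Pi.add_apply, Pi.single_eq_same, cofr,
            Fin.insertNth_apply_same]
        · obtain ⟨i', rfl⟩ := Fin.exists_succAbove_eq hij
          simp only [hV, Function.update_of_ne hij, Pi.add_apply,
            Pi.single_eq_of_ne hij, add_zero, cofr, Fin.insertNth_apply_succAbove]
      rw [u1, hh]
      simp only []
      rw [sum_insertNth]
      rw [show (-(2 * π * I * ((σ j : ℂ) * (t:ℝ) + ∑ i', (σ (j.succAbove i') : ℂ) * (y i' : ℂ))))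
        = (-(2 * π * I * (σ j : ℂ) * ((t:ℂ) + (c j + d)))) + (2 * π * I * (σ j : ℂ) * (c j + d))
          + (-(2 * π * I * (∑ i', (σ (j.succAbove i') : ℂ) * (y i' : ℂ)))) by ring]
      rw [Complex.exp_add, Complex.exp_add]
      ring
    simp_rw [e1]
    rw [intervalIntegral.integral_const_mul]
    congr 1
    exact shift1 h hhd hhp (c j + d)
  have key0 := key 0
  rw [show c + Pi.single j (0:ℂ) = c by simp] at key0
  simp only [add_zero] at key0
  rw [key w, key0]
  rw [show 2 * π * I * (σ j : ℂ) * (c j + w)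
    = 2 * π * I * (σ j : ℂ) * w + 2 * π * I * (σ j : ℂ) * (c j) by ring, Complex.exp_add]
  ring


lemma boxInt_shift {n : ℕ} (g : (Fin (n+1) → ℂ) → ℂ) (hg : Differentiable ℂ g)
    (hper : ∀ j : Fin (n+1), ∀ z, g (z + Pi.single j 1) = g z)
    (σ : Fin (n+1) → ℤ) (c : Fin (n+1) → ℂ) :
    boxInt g σ c = Complex.exp (2 * π * I * (∑ j, (σ j : ℂ) * c j)) * boxInt g σ 0 := by
  have main : ∀ s : Finset (Fin (n+1)),
      boxInt g σ (∑ j ∈ s, Pi.single j (c j))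
        = Complex.exp (2 * π * I * (∑ j ∈ s, (σ j : ℂ) * c j)) * boxInt g σ 0 := by
    intro s
    induction s using Finset.induction_on with
    | empty => simp
    | @insert a s ha ih =>
      rw [Finset.sum_insert ha, Finset.sum_insert ha,
        add_comm (Pi.single a (c a) : Fin (n+1) → ℂ) (∑ x ∈ s, Pi.single x (c x))]
      rw [boxInt_single_shift g hg hper σ _ a (c a), ih]
      rw [mul_add, Complex.exp_add]
      ring
  have := main Finset.univ
  rwa [Finset.univ_sum_single c] at this

lemma exp_int_integral_zero {n : ℕ} (σ : Fin (n+1) → ℤ) (hσ : σ ≠ 0) :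
    ∫ x, Complex.exp (-(2 * π * I * (∑ i, (σ i : ℂ) * (x i : ℂ)))) ∂(boxMeasure (n+1)) = 0 := by
  obtain ⟨j, hj⟩ : ∃ j, σ j ≠ 0 := by
    by_contra hc
    push_neg at hc
    exact hσ (funext hc)
  have h1 : boxInt (fun _ => (1:ℂ)) σ (0 + Pi.single j (1 / (2 * (σ j : ℂ))))
      = Complex.exp (2 * π * I * (σ j : ℂ) * (1 / (2 * (σ j : ℂ)))) * boxInt (fun _ => 1) σ 0 :=
    boxInt_single_shift _ (differentiable_const 1) (fun _ _ => rfl) σ 0 j _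
  have hσj : ((σ j : ℂ)) ≠ 0 := Int.cast_ne_zero.mpr hj
  have hexp : Complex.exp (2 * π * I * (σ j : ℂ) * (1 / (2 * (σ j : ℂ)))) = -1 := by
    rw [show 2 * (π:ℂ) * I * (σ j : ℂ) * (1 / (2 * (σ j : ℂ))) = π * I by
      field_simp]
    exact Complex.exp_pi_mul_I
  have h2 : boxInt (fun _ => (1:ℂ)) σ (0 + Pi.single j (1 / (2 * (σ j : ℂ))))
      = boxInt (fun _ => (1:ℂ)) σ 0 := rfl
  rw [h2, hexp] at h1
  have : boxInt (fun _ => (1:ℂ)) σ 0 = 0 := by linear_combination h1 / 2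
  have e : boxInt (fun _ => (1:ℂ)) σ 0
      = ∫ x, Complex.exp (-(2 * π * I * (∑ i, (σ i : ℂ) * (x i : ℂ)))) ∂(boxMeasure (n+1)) := by
    unfold boxInt
    simp
  rw [← e, this]


lemma continuous_cons {k : ℕ} :
    Continuous (fun p : ℝ × (Fin k → ℝ) => (Fin.cons p.1 p.2 : Fin (k+1) → ℝ)) := by
  apply continuous_pi
  intro i
  refine Fin.cases ?_ ?_ i
  · simpa using continuous_fst
  · intro i'
    simp; exact (continuous_apply i').comp continuous_snd

lemma cons_add_single {k : ℕ} (s : ℝ) (y : Fin k → ℝ) (j : Fin k) :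
    (Fin.cons s (y + Pi.single j 1) : Fin (k+1) → ℝ)
      = (Fin.cons s y : Fin (k+1) → ℝ) + Pi.single j.succ 1 := by
  funext i
  refine Fin.cases ?_ ?_ i
  · simp [Pi.single_eq_of_ne (Fin.succ_ne_zero j).symm]
  · intro i'
    by_cases hij : i' = j
    · subst hij; simp
    · simp [Pi.single_eq_of_ne hij,
        Pi.single_eq_of_ne (fun h => hij (Fin.succ_injective _ h))]

lemma cons_succ_eq_add_single {k : ℕ} (s : ℝ) (y : Fin k → ℝ) :
    (Fin.cons (s + 1) y : Fin (k+1) → ℝ) = (Fin.cons s y : Fin (k+1) → ℝ) + Pi.single 0 1 := by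
  funext i
  refine Fin.cases ?_ ?_ i
  · simp
  · intro i'
    simp [Pi.single_eq_of_ne (Fin.succ_ne_zero i')]

theorem box_unique : ∀ (k : ℕ) (f : (Fin k → ℝ) → ℂ), Continuous f →
    (∀ (j : Fin k) (x : Fin k → ℝ), f (x + Pi.single j 1) = f x) →
    (∀ σ : Fin k → ℤ,
      (∫ x, f x * Complex.exp (-(2 * π * I * (∑ i, (σ i : ℂ) * (x i : ℂ)))) ∂(boxMeasure k)) = 0) →
    ∀ x, f x = 0 := by
  intro k
  induction k with
  | zero =>
    intro f hf hper hcoeff x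
    have h0 := hcoeff 0
    have hconst : ∀ y : Fin 0 → ℝ, f y = f x := fun y => by
      congr 1; exact Subsingleton.elim y x
    have : (∫ y, f y * Complex.exp (-(2 * π * I * (∑ i : Fin 0, ((0:ℤ) : ℂ) * (y i : ℂ))))
        ∂(boxMeasure 0)) = f x := by
      have : ∀ y : Fin 0 → ℝ,
          f y * Complex.exp (-(2 * π * I * (∑ i : Fin 0, ((0:ℤ) : ℂ) * (y i : ℂ)))) = f x := by
        intro y
        simp [hconst y]
      rw [integral_congr_ae (Filter.Eventually.of_forall this)]
      simp
    rw [← this]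
    exact h0
  | succ k ih =>
    intro f hf hper hcoeff
    set ψ : ℤ → (Fin k → ℝ) → ℂ := fun t y =>
      ∫ s in (0:ℝ)..1, f (Fin.cons s y) * Complex.exp (-(2 * π * I * t * s)) with hψ
    have hψcont : ∀ t : ℤ, Continuous (ψ t) := by
      intro t
      apply intervalIntegral.continuous_parametric_intervalIntegral_of_continuous'
      apply Continuous.mul
      · exact hf.comp (continuous_cons.comp (continuous_snd.prodMk continuous_fst))
      · exact Complex.continuous_exp.comp (by fun_prop)
    have hψper : ∀ t : ℤ, ∀ (j : Fin k) (y : Fin k → ℝ), ψ t (y + Pi.single j 1) = ψ t y := by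
      intro t j y
      simp only [hψ]
      congr 1
      funext s
      rw [cons_add_single, hper j.succ]
    have hψcoeff : ∀ t : ℤ, ∀ σ' : Fin k → ℤ,
        (∫ y, ψ t y * Complex.exp (-(2 * π * I * (∑ i, (σ' i : ℂ) * (y i : ℂ))))
          ∂(boxMeasure k)) = 0 := by
      intro t σ'
      have hpeel := boxMeasure_peel (0 : Fin (k+1))
        (fun x => f x * Complex.exp
          (-(2 * π * I * (∑ i, ((Fin.cons t σ' : Fin (k+1) → ℤ) i : ℂ) * (x i : ℂ)))))
        (by
          apply Continuous.mul hf
          exact Complex.continuous_exp.comp (by fun_prop))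
      rw [hcoeff (Fin.cons t σ')] at hpeel
      refine Eq.trans ?_ hpeel.symm
      refine integral_congr_ae (Filter.Eventually.of_forall fun y => ?_)
      simp only [hψ]
      rw [← intervalIntegral.integral_mul_const]
      refine intervalIntegral.integral_congr fun s _ => ?_
      rw [Fin.insertNth_zero']
      have hsum : (∑ i, ((Fin.cons t σ' : Fin (k+1) → ℤ) i : ℂ)
            * (((Fin.cons s y : Fin (k+1) → ℝ) i : ℝ) : ℂ))
          = (t : ℂ) * (s : ℂ) + ∑ i, (σ' i : ℂ) * (y i : ℂ) := by
        rw [Fin.sum_univ_succ]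
        simp
      rw [hsum]
      rw [show -(2 * (π:ℂ) * I * ((t : ℂ) * (s : ℂ) + ∑ i, (σ' i : ℂ) * (y i : ℂ)))
        = -(2 * π * I * t * s) + -(2 * π * I * (∑ i, (σ' i : ℂ) * (y i : ℂ))) by ring]
      rw [Complex.exp_add]
      ring
    have hψzero : ∀ t : ℤ, ∀ y, ψ t y = 0 := fun t =>
      ih (ψ t) (hψcont t) (hψper t) (hψcoeff t)
    intro x
    have hx : x = Fin.cons (x 0) (Fin.tail x) := (Fin.cons_self_tail x).symm
    rw [hx]
    set u : ℝ → ℂ := fun s => f (Fin.cons s (Fin.tail x)) with hu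
    have hu_cont : Continuous u :=
      hf.comp (continuous_cons.comp (continuous_id.prodMk continuous_const))
    have hu_per : Function.Periodic u 1 := by
      intro s
      simp only [hu]
      rw [cons_succ_eq_add_single, hper 0]
    have hu_coeff : ∀ t : ℤ, (∫ s in (0:ℝ)..1, u s * Complex.exp (-(2 * π * I * t * s))) = 0 :=
      fun t => hψzero t (Fin.tail x)
    exact unique1 u hu_cont hu_per hu_coeff (x 0)


lemma entire_eq_const_of_real {N : ℕ} (f : (Fin N → ℂ) → ℂ) (hf : Differentiable ℂ f) (c : ℂ)
    (h : ∀ x : Fin N → ℝ, f (cofr x) = c) : ∀ z, f z = c := by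
  classical
  have main : ∀ s : Finset (Fin N), ∀ z : Fin N → ℂ,
      (∀ i, i ∉ s → ∃ r : ℝ, z i = (r : ℂ)) → f z = c := by
    intro s
    induction s using Finset.induction_on with
    | empty =>
      intro z hz
      have : z = cofr (fun i => (Classical.choose (hz i (Finset.notMem_empty i)))) := by
        funext i
        exact Classical.choose_spec (hz i (Finset.notMem_empty i))
      rw [this, h]
    | @insert a s ha ih =>
      intro z hz
      set φ : ℂ → ℂ := fun ζ => f (Function.update z a ζ) - c with hφ
      have hφd : Differentiable ℂ φ := (slice_diff f hf z a).sub_const c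
      have hφreal : ∀ r : ℝ, φ (r : ℂ) = 0 := by
        intro r
        have : f (Function.update z a (r : ℂ)) = c := by
          apply ih
          intro i hi
          by_cases hia : i = a
          · subst hia; exact ⟨r, Function.update_self _ _ _⟩
          · rw [Function.update_of_ne hia]
            exact hz i (by simp [hia, hi])
        simp [hφ, this]
      have hfreq : ∃ᶠ ζ in nhdsWithin (0:ℂ) {(0:ℂ)}ᶜ, φ ζ = 0 := by
        have htend : Filter.Tendsto (fun k : ℕ => ((1 / (k + 1) : ℝ) : ℂ)) Filter.atTop
            (nhdsWithin (0:ℂ) {(0:ℂ)}ᶜ) := by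
          apply tendsto_nhdsWithin_of_tendsto_nhds_of_eventually_within
          · have h2 := (Complex.continuous_ofReal.tendsto 0).comp
              tendsto_one_div_add_atTop_nhds_zero_nat
            rw [Complex.ofReal_zero] at h2
            exact h2
          · refine Filter.Eventually.of_forall fun k => ?_
            simp only [Set.mem_compl_iff, Set.mem_singleton_iff]
            intro hk
            rw [Complex.ofReal_eq_zero] at hk
            have : (0:ℝ) < 1 / (k + 1) := by positivity
            linarith
        exact htend.frequently (Filter.Frequently.of_forall fun k => hφreal _)
      have han : AnalyticOnNhd ℂ φ Set.univ := fun ζ _ => hφd.analyticAt ζ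
      have := han.eqOn_zero_of_preconnected_of_frequently_eq_zero
        isPreconnected_univ (Set.mem_univ (0:ℂ)) hfreq (Set.mem_univ (z a))
      have hupd : Function.update z a (z a) = z := Function.update_eq_self a z
      have : φ (z a) = 0 := this
      rw [hφ] at this
      simp only [hupd] at this
      linear_combination this
  intro z
  exact main Finset.univ z (fun i hi => absurd (Finset.mem_univ i) (by simp [hi]))


lemma cofr_add_single {N : ℕ} (x : Fin N → ℝ) (j : Fin N) :
    cofr (x + Pi.single j 1) = cofr x + Pi.single j (1:ℂ) := by
  funext i
  by_cases hij : i = j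
  · subst hij; simp [cofr]
  · simp [cofr, Pi.single_eq_of_ne hij]

/-- Proposition 2.6, part 1, criterion.  Let `Λ ⊆ ℂⁿ` be the
lattice generated by the `n+m` columns of `(Iₙ S)` (assumed ℝ-linearly
independent), `1 ≤ m ≤ n`.  Then every `Λ`-periodic entire function `ℂⁿ → ℂ`
is constant iff `ᵗσ S ∉ ℤᵐ` for every nonzero `σ ∈ ℤⁿ`. -/
theorem stmt4 (n m : ℕ) (hm1 : 1 ≤ m) (hmn : m ≤ n)
    (S : Matrix (Fin n) (Fin m) ℂ)
    (cols : Fin n ⊕ Fin m → (Fin n → ℂ))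
    (hcols : cols = Sum.elim (fun j : Fin n => (Pi.single j 1 : Fin n → ℂ))
      (fun k : Fin m => fun i : Fin n => S i k))
    (hindep : LinearIndependent ℝ cols)
    (Λ : AddSubgroup (Fin n → ℂ))
    (hΛ : Λ = AddSubgroup.closure (Set.range cols)) :
    (∀ f : (Fin n → ℂ) → ℂ, Differentiable ℂ f →
      (∀ lam ∈ Λ, ∀ z : Fin n → ℂ, f (z + lam) = f z) → ∃ c : ℂ, ∀ z, f z = c)
    ↔
    (∀ σ : Fin n → ℤ, σ ≠ 0 →
      ¬ ∃ τ : Fin m → ℤ, ∀ k : Fin m, ∑ i, (σ i : ℂ) * S i k = (τ k : ℂ)) := by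
  subst hcols hΛ
  constructor
  · -- forward direction
    intro hconst σ hσ hex
    obtain ⟨τ, hτ⟩ := hex
    obtain ⟨j, hj⟩ : ∃ j, σ j ≠ 0 := by
      by_contra hc; push_neg at hc; exact hσ (funext hc)
    set f : (Fin n → ℂ) → ℂ := fun z => Complex.exp (2 * π * I * ∑ i, (σ i : ℂ) * z i) with hf
    have hfd : Differentiable ℂ f := by
      apply Complex.differentiable_exp.comp
      apply Differentiable.const_mul
      apply Differentiable.fun_sum
      intro i _
      exact ((ContinuousLinearMap.proj i : (Fin n → ℂ) →L[ℂ] ℂ).differentiable).const_mul _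
    have hint : ∀ lam : Fin n → ℂ, (∃ M : ℤ, ∑ i, (σ i : ℂ) * lam i = (M : ℂ)) →
        ∀ z, f (z + lam) = f z := by
      intro lam ⟨M, hM⟩ z
      simp only [hf]
      have : (∑ i, (σ i : ℂ) * (z + lam) i) = (∑ i, (σ i : ℂ) * z i) + (M : ℂ) := by
        rw [← hM, ← Finset.sum_add_distrib]
        congr 1; funext i; simp; ring
      rw [this, mul_add, Complex.exp_add, mul_comm (2 * (π:ℂ) * I) (M:ℂ),
        Complex.exp_int_mul_two_pi_mul_I, mul_one]
    have hper : ∀ lam ∈ AddSubgroup.closure (Set.range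
        (Sum.elim (fun j : Fin n => (Pi.single j 1 : Fin n → ℂ))
          (fun k : Fin m => fun i : Fin n => S i k))), ∀ z, f (z + lam) = f z := by
      intro lam hlam
      induction hlam using AddSubgroup.closure_induction with
      | mem lam hlam =>
        obtain ⟨jk, rfl⟩ := hlam
        cases jk with
        | inl j' =>
          apply hint
          refine ⟨σ j', ?_⟩
          simp [Pi.single_apply, Finset.sum_ite_eq']
        | inr k =>
          apply hint
          exact ⟨τ k, hτ k⟩
      | zero => intro z; simp
      | add a b _ _ iha ihb =>
        intro z
        rw [← add_assoc, ihb, iha]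
      | neg a _ iha =>
        intro z
        have := iha (z + -a)
        simp only [neg_add_cancel_right] at this
        rw [← this]
    obtain ⟨c, hc⟩ := hconst f hfd hper
    have h0 : f 0 = 1 := by simp [hf]
    have h1 : f ((Pi.single j ((2 * (σ j : ℂ))⁻¹) : Fin n → ℂ)) = -1 := by
      simp only [hf]
      have : (∑ i, (σ i : ℂ) * (Pi.single j ((2 * (σ j : ℂ))⁻¹) : Fin n → ℂ) i) = (2:ℂ)⁻¹ := by
        rw [Finset.sum_eq_single j]
        · rw [Pi.single_eq_same, mul_inv, ← mul_assoc, mul_comm,← mul_assoc,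
            inv_mul_cancel₀ (Int.cast_ne_zero.mpr hj), one_mul]
        · intro b _ hb; rw [Pi.single_eq_of_ne hb, mul_zero]
        · intro hb; exact absurd (Finset.mem_univ j) hb
      rw [this]
      rw [show 2 * (π:ℂ) * I * (2:ℂ)⁻¹ = π * I by field_simp]
      exact Complex.exp_pi_mul_I
    rw [hc 0] at h0
    rw [hc _] at h1
    rw [h0] at h1
    norm_num at h1
  · -- backward direction
    intro hcond f hf hper
    obtain ⟨n', rfl⟩ : ∃ n', n = n' + 1 :=
      ⟨n - 1, (Nat.succ_pred_eq_of_pos (lt_of_lt_of_le Nat.zero_lt_one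
        (le_trans hm1 hmn))).symm⟩
    have hgen : ∀ v ∈ Set.range (Sum.elim
        (fun j : Fin (n'+1) => (Pi.single j 1 : Fin (n'+1) → ℂ))
        (fun k : Fin m => fun i : Fin (n'+1) => S i k)), ∀ z, f (z + v) = f z :=
      fun v hv => hper v (AddSubgroup.subset_closure hv)
    have hE : ∀ (j : Fin (n'+1)) z, f (z + Pi.single j 1) = f z :=
      fun j z => hgen _ ⟨Sum.inl j, rfl⟩ z
    have hS : ∀ (k : Fin m) z, f (z + fun i => S i k) = f z :=
      fun k z => hgen _ ⟨Sum.inr k, rfl⟩ z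
    have hC : Continuous f := hf.continuous
    have hcofr : Continuous (fun x : Fin (n'+1) → ℝ => cofr x) :=
      continuous_pi fun i => Complex.continuous_ofReal.comp (continuous_apply i)
    have hczero : ∀ σ : Fin (n'+1) → ℤ, σ ≠ 0 → boxInt f σ 0 = 0 := by
      intro σ hσ
      by_contra hne
      refine hcond σ hσ ?_
      have hτ : ∀ k : Fin m, ∃ M : ℤ, ∑ i, (σ i : ℂ) * S i k = (M : ℂ) := by
        intro k
        have h1 : boxInt f σ (fun i => S i k) = boxInt f σ 0 := by
          unfold boxInt
          refine MeasureTheory.integral_congr_ae (Filter.Eventually.of_forall fun x => ?_)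
          simp only [add_zero]
          rw [hS k (cofr x)]
        have h2 := boxInt_shift f hf hE σ (fun i => S i k)
        rw [h1] at h2
        have h3 : (Complex.exp (2 * π * I * (∑ i, (σ i : ℂ) * S i k)) - 1)
            * boxInt f σ 0 = 0 := by linear_combination -h2
        rcases mul_eq_zero.mp h3 with h4 | h4
        · have h5 : Complex.exp (2 * π * I * (∑ i, (σ i : ℂ) * S i k)) = 1 :=
            by linear_combination h4
          obtain ⟨M, hM⟩ := Complex.exp_eq_one_iff.mp h5
          refine ⟨M, ?_⟩
          have h2pi : (2 * (π:ℂ) * I) ≠ 0 := by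
            simp [Real.pi_ne_zero, Complex.I_ne_zero, Complex.ofReal_ne_zero]
          apply mul_left_cancel₀ h2pi
          rw [hM]; ring
        · exact absurd h4 hne
      choose τ hτk using hτ
      exact ⟨τ, hτk⟩
    set c0 : ℂ := ∫ x, f (cofr x) ∂(boxMeasure (n'+1)) with hc0
    set φ : (Fin (n'+1) → ℝ) → ℂ := fun x => f (cofr x) - c0 with hφ
    have hφcont : Continuous φ := (hC.comp hcofr).sub continuous_const
    have hφper : ∀ (j : Fin (n'+1)) (x : Fin (n'+1) → ℝ), φ (x + Pi.single j 1) = φ x := by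
      intro j x
      simp only [hφ]
      rw [cofr_add_single, hE j]
    have hφcoeff : ∀ σ : Fin (n'+1) → ℤ,
        (∫ x, φ x * Complex.exp (-(2 * π * I * (∑ i, (σ i : ℂ) * (x i : ℂ))))
          ∂(boxMeasure (n'+1))) = 0 := by
      intro σ
      have hsplit : ∀ x : Fin (n'+1) → ℝ,
          φ x * Complex.exp (-(2 * π * I * (∑ i, (σ i : ℂ) * (x i : ℂ))))
          = f (cofr x) * Complex.exp (-(2 * π * I * (∑ i, (σ i : ℂ) * (x i : ℂ))))
            - c0 * Complex.exp (-(2 * π * I * (∑ i, (σ i : ℂ) * (x i : ℂ)))) := by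
        intro x; simp only [hφ]; ring
      have hEcont : Continuous (fun x : Fin (n'+1) → ℝ =>
          Complex.exp (-(2 * π * I * (∑ i, (σ i : ℂ) * (x i : ℂ))))) :=
        Complex.continuous_exp.comp (by fun_prop)
      have hint1 : Integrable (fun x : Fin (n'+1) → ℝ =>
          f (cofr x) * Complex.exp (-(2 * π * I * (∑ i, (σ i : ℂ) * (x i : ℂ)))))
          (boxMeasure (n'+1)) :=
        boxMeasure_integrable _ ((hC.comp hcofr).mul hEcont)
      have hint2 : Integrable (fun x : Fin (n'+1) → ℝ =>
          c0 * Complex.exp (-(2 * π * I * (∑ i, (σ i : ℂ) * (x i : ℂ)))))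
          (boxMeasure (n'+1)) :=
        boxMeasure_integrable _ (continuous_const.mul hEcont)
      rw [MeasureTheory.integral_congr_ae (Filter.Eventually.of_forall hsplit),
        MeasureTheory.integral_sub hint1 hint2, MeasureTheory.integral_const_mul]
      by_cases hσ : σ = 0
      · subst hσ
        have hone : ∀ x : Fin (n'+1) → ℝ,
            Complex.exp (-(2 * π * I * (∑ i, (((0 : Fin (n'+1) → ℤ) i : ℤ) : ℂ) * (x i : ℂ)))) = 1 := by
          intro x; simp
        rw [MeasureTheory.integral_congr_ae (Filter.Eventually.of_forall fun x => by rw [hone x, mul_one]),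
          integral_congr_ae (Filter.Eventually.of_forall fun x => hone x)]
        simp [hc0]
      · have e1 : (∫ x, f (cofr x)
            * Complex.exp (-(2 * π * I * (∑ i, (σ i : ℂ) * (x i : ℂ))))
            ∂(boxMeasure (n'+1))) = boxInt f σ 0 := by
          unfold boxInt
          refine MeasureTheory.integral_congr_ae (Filter.Eventually.of_forall fun x => ?_)
          simp only [add_zero]
        rw [e1, hczero σ hσ, exp_int_integral_zero σ hσ, mul_zero, sub_zero]
    have hφzero := box_unique (n'+1) φ hφcont hφper hφcoeff
    refine ⟨c0, ?_⟩
    apply entire_eq_const_of_real f hf c0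
    intro x
    have := hφzero x
    simp only [hφ] at this
    linear_combination this
end

section
/- Let s₁, …, s_n be complex numbers that are algebraic over ℚ. Then there exist constants C > 0 and p < 0, depending only on s₁, …, s_n, such that for all integers μ₁, …, μ_n, ν with μ₁s₁ + ⋯ + μ_ns_n + ν ≠ 0 and (μ₁, …, μ_n, ν) ≠ 0, one has |μ₁s₁ + ⋯ + μ_ns_n + ν| ≥ C·(|μ₁| + ⋯ + |μ_n| + |ν|)^{p}. -/
open IntermediateField Module Finset

set_option maxHeartbeats 1000000

/-- lower bound for integer linear forms in algebraic
numbers, used in the proof of Theorem 4.3.  If `s₁, …, s_n` are algebraic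
complex numbers, there are constants `C > 0` and `p < 0` such that
`|μ₁s₁ + ⋯ + μ_ns_n + ν| ≥ C (|μ₁| + ⋯ + |μ_n| + |ν|)^p` for all integers
`μ₁, …, μ_n, ν`, not all zero, with `μ₁s₁ + ⋯ + μ_ns_n + ν ≠ 0`. -/
theorem stmt10 (n : ℕ) (s : Fin n → ℂ) (halg : ∀ i, IsAlgebraic ℚ (s i)) :
    ∃ C : ℝ, 0 < C ∧ ∃ p : ℝ, p < 0 ∧
      ∀ (μ : Fin n → ℤ) (ν : ℤ),
        (∑ i, (μ i : ℂ) * s i + (ν : ℂ)) ≠ 0 →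
        ¬ (μ = 0 ∧ ν = 0) →
        ‖∑ i, (μ i : ℂ) * s i + (ν : ℂ)‖ ≥
          C * ((∑ i, (|μ i| : ℝ)) + (|ν| : ℝ)) ^ p := by
  set K := IntermediateField.adjoin ℚ (Set.range s) with hKdef
  haveI : Finite (Set.range s) := Set.finite_range s
  haveI : FiniteDimensional ℚ K :=
    IntermediateField.finiteDimensional_adjoin (fun x hx => isAlgebraic_iff_isIntegral.mp
      (by obtain ⟨i, rfl⟩ := hx; exact halg i))
  set t : Fin n → K := fun i => ⟨s i, IntermediateField.subset_adjoin ℚ _ ⟨i, rfl⟩⟩ with htdef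
  -- common denominator
  have hD : ∃ D : ℕ, 0 < D ∧ ∀ i, IsIntegral ℤ ((D : ℂ) * s i) := by
    have h1 : ∀ i, ∃ y : ℤ, y ≠ 0 ∧ IsIntegral ℤ ((y : ℂ) * s i) := by
      intro i
      have halgZ : IsAlgebraic ℤ (s i) :=
        (IsFractionRing.isAlgebraic_iff ℤ ℚ ℂ).mpr (halg i)
      obtain ⟨y, hy, hint⟩ := halgZ.exists_integral_multiple
      exact ⟨y, hy, by rwa [Algebra.smul_def, algebraMap_int_eq, eq_intCast] at hint⟩
    choose y hy hyint using h1
    refine ⟨∏ i, (y i).natAbs, ?_, ?_⟩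
    · exact Finset.prod_pos fun i _ => Int.natAbs_pos.mpr (hy i)
    · intro i
      have hdvd : y i ∣ (∏ j, (y j).natAbs : ℕ) := by
        refine dvd_trans (Int.dvd_natAbs.mpr dvd_rfl) ?_
        exact_mod_cast Int.natCast_dvd_natCast.mpr
          (Finset.dvd_prod_of_mem (fun j => (y j).natAbs) (mem_univ i))
      obtain ⟨c, hc⟩ := hdvd
      have hc' : ((∏ j, (y j).natAbs : ℕ) : ℂ) = (y i : ℂ) * (c : ℂ) := by
        have h3 : ((((∏ j, (y j).natAbs : ℕ) : ℤ)) : ℂ) = ((y i * c : ℤ) : ℂ) :=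
          congrArg (fun z : ℤ => (z : ℂ)) hc
        rw [Int.cast_natCast, Int.cast_mul] at h3
        exact h3
      have : ((∏ j, (y j).natAbs : ℕ) : ℂ) * s i = (c : ℂ) * ((y i : ℂ) * s i) := by
        rw [hc']; ring
      rw [this]
      exact (isIntegral_algebraMap (A := ℂ) (x := c)).mul (hyint i)
  obtain ⟨D, hDpos, hDint⟩ := hD
  set d := finrank ℚ K with hddef
  -- embeddings
  set e := Fintype.card (K →ₐ[ℚ] ℂ) - 1 with hedef
  set M : ℝ := 1 + ∑ σ : K →ₐ[ℚ] ℂ, ∑ i, ‖σ (t i)‖ with hMdef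
  have hM1 : (1:ℝ) ≤ M := by
    have : (0:ℝ) ≤ ∑ σ : K →ₐ[ℚ] ℂ, ∑ i, ‖σ (t i)‖ :=
      Finset.sum_nonneg fun _ _ => Finset.sum_nonneg fun _ _ => norm_nonneg _
    linarith
  have hMb : ∀ (σ : K →ₐ[ℚ] ℂ) i, ‖σ (t i)‖ ≤ M := by
    intro σ i
    have h1 : ‖σ (t i)‖ ≤ ∑ j, ‖σ (t j)‖ :=
      Finset.single_le_sum (f := fun j => ‖σ (t j)‖) (fun j _ => norm_nonneg _) (mem_univ i)
    have h2 : ∑ j, ‖σ (t j)‖ ≤ ∑ τ : K →ₐ[ℚ] ℂ, ∑ j, ‖τ (t j)‖ :=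
      Finset.single_le_sum (f := fun τ => ∑ j, ‖τ (t j)‖)
        (fun τ _ => Finset.sum_nonneg fun _ _ => norm_nonneg _) (mem_univ σ)
    linarith
  have hDR : (0:ℝ) < (D:ℝ)^d := by positivity
  have hMe : (0:ℝ) < M^e := by positivity
  refine ⟨((D:ℝ)^d * M^e)⁻¹, by positivity, -(e:ℝ) - 1, by
    have : (0:ℝ) ≤ (e:ℝ) := Nat.cast_nonneg e
    linarith, ?_⟩
  intro μ ν h0 hnz
  classical
  set x : K := ∑ i, (μ i : K) * t i + (ν : K) with hxdef
  have hxval : (x : ℂ) = ∑ i, (μ i : ℂ) * s i + (ν : ℂ) := by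
    push_cast [hxdef]
    rfl
  have hx0 : x ≠ 0 := by
    intro h
    apply h0
    rw [← hxval, h]
    simp
  set S : ℝ := (∑ i, (|μ i| : ℝ)) + (|ν| : ℝ) with hSdef
  have hS1 : (1:ℝ) ≤ S := by
    rcases eq_or_ne ν 0 with hν | hν
    · have hμ : μ ≠ 0 := fun h => hnz ⟨h, hν⟩
      obtain ⟨i, hi⟩ := Function.ne_iff.mp hμ
      have h1 : (1:ℝ) ≤ (|μ i| : ℝ) := by
        have := Int.one_le_abs (by simpa using hi)
        exact_mod_cast this
      have h2 : (|μ i| : ℝ) ≤ ∑ j, (|μ j| : ℝ) :=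
        Finset.single_le_sum (f := fun j => (|μ j| : ℝ))
          (fun j _ => by positivity) (mem_univ i)
      have h3 : (0:ℝ) ≤ (|ν| : ℝ) := by positivity
      simp only [hSdef]; linarith
    · have h1 : (1:ℝ) ≤ (|ν| : ℝ) := by
        have := Int.one_le_abs hν
        exact_mod_cast this
      have h2 : (0:ℝ) ≤ ∑ j, (|μ j| : ℝ) := Finset.sum_nonneg fun j _ => by positivity
      simp only [hSdef]; linarith
  have hSpos : (0:ℝ) < S := lt_of_lt_of_le one_pos hS1
  -- the norm of x
  set q : ℚ := Algebra.norm ℚ x with hqdef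
  have hq0 : q ≠ 0 := Algebra.norm_ne_zero_iff.mpr hx0
  -- integrality of D • x
  have hwint : IsIntegral ℤ ((D : K) * x) := by
    have heq : (D : K) * x = ∑ i, (μ i : K) * ((D : K) * t i) + ((D * ν : ℤ) : K) := by
      rw [hxdef, mul_add, Finset.mul_sum]
      push_cast
      congr 1
      exact Finset.sum_congr rfl fun j _ => by ring
    rw [heq]
    refine IsIntegral.add (IsIntegral.sum _ fun i _ => ?_) ?_
    · refine IsIntegral.mul ?_ ?_
      · exact isIntegral_algebraMap (A := K) (x := μ i)
      · rw [← IntermediateField.coe_isIntegral_iff (R := ℤ)]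
        have : (((D : K) * t i : K) : ℂ) = (D : ℂ) * s i := by push_cast; rfl
        rw [this]
        exact hDint i
    · exact isIntegral_algebraMap (A := K) (x := D * ν)
  -- the norm of D • x is a nonzero integer
  have hnormw : Algebra.norm ℚ ((D : K) * x) = (D : ℚ) ^ d * q := by
    have h : (D : K) = algebraMap ℚ K (D : ℚ) := (map_natCast (algebraMap ℚ K) D).symm
    rw [h, map_mul, Algebra.norm_algebraMap, hqdef, hddef]
  have hqlow : (1:ℝ) ≤ (D:ℝ)^d * |(q:ℝ)| := by
    have hni : IsIntegral ℤ (Algebra.norm ℚ ((D : K) * x)) :=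
      Algebra.isIntegral_norm (R := ℤ) (K := ℚ) (L := ↥K) hwint
    obtain ⟨m, hm⟩ := IsIntegrallyClosed.isIntegral_iff.mp hni
    have hm' : (m : ℚ) = (D : ℚ) ^ d * q := by rw [← hnormw]; exact_mod_cast hm
    have hm0 : m ≠ 0 := by
      intro h
      rw [h] at hm'
      have : (D:ℚ) ^ d * q ≠ 0 := by positivity
      exact this (by exact_mod_cast hm'.symm)
    have h1 : (1:ℚ) ≤ |(m:ℚ)| := by exact_mod_cast Int.one_le_abs hm0
    rw [hm', abs_mul] at h1
    have : |(D:ℚ)^d| = (D:ℚ)^d := abs_of_nonneg (by positivity)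
    rw [this] at h1
    calc (1:ℝ) ≤ ((D:ℚ)^d * |q| : ℚ) := by exact_mod_cast h1
    _ = (D:ℝ)^d * |(q:ℝ)| := by push_cast; ring
  -- product of embeddings
  have hprod : ∏ σ : K →ₐ[ℚ] ℂ, ‖σ x‖ = |(q:ℝ)| := by
    have h1 : algebraMap ℚ ℂ q = ∏ σ : K →ₐ[ℚ] ℂ, σ x :=
      Algebra.norm_eq_prod_embeddings ℚ ℂ x
    have h2 : ‖algebraMap ℚ ℂ q‖ = |(q:ℝ)| := by
      rw [show algebraMap ℚ ℂ q = (q : ℂ) from rfl, Complex.norm_ratCast]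
    rw [← h2, h1, norm_prod]
  set ι : K →ₐ[ℚ] ℂ := K.val with hιdef
  have hιx : ι x = ∑ i, (μ i : ℂ) * s i + (ν : ℂ) := hxval
  -- bound on each embedding
  have hσb : ∀ σ : K →ₐ[ℚ] ℂ, ‖σ x‖ ≤ M * S := by
    intro σ
    have hσx : σ x = ∑ i, (μ i : ℂ) * σ (t i) + (ν : ℂ) := by
      rw [hxdef]
      rw [map_add, map_sum]
      congr 1
      · exact Finset.sum_congr rfl fun i _ => by rw [map_mul, map_intCast]
      · exact map_intCast σ ν
    rw [hσx]
    calc ‖∑ i, (μ i : ℂ) * σ (t i) + (ν : ℂ)‖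
        ≤ ‖∑ i, (μ i : ℂ) * σ (t i)‖ + ‖(ν : ℂ)‖ := norm_add_le _ _
      _ ≤ (∑ i, ‖(μ i : ℂ) * σ (t i)‖) + ‖(ν : ℂ)‖ := by
          gcongr
          exact norm_sum_le _ _
      _ ≤ (∑ i, (|μ i| : ℝ) * M) + (|ν| : ℝ) * M := by
          refine add_le_add (Finset.sum_le_sum fun i _ => ?_) ?_
          · rw [norm_mul, Complex.norm_intCast, ← Int.cast_abs]
            exact mul_le_mul_of_nonneg_left (hMb σ i) (by positivity)
          · rw [Complex.norm_intCast, ← Int.cast_abs]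
            have h1 : (0:ℝ) ≤ ((|ν| : ℤ) : ℝ) := by positivity
            nlinarith [hM1]
      _ = M * S := by rw [hSdef, ← Finset.sum_mul]; ring
  -- split off ι from product
  have hcard : (univ.erase ι).card = e := by
    rw [Finset.card_erase_of_mem (mem_univ ι), Finset.card_univ, hedef]
  have hsplit : ‖ι x‖ * ∏ σ ∈ univ.erase ι, ‖σ x‖ = |(q:ℝ)| := by
    rw [← hprod]
    exact Finset.mul_prod_erase univ (fun σ => ‖σ x‖) (mem_univ ι)
  have herase : ∏ σ ∈ univ.erase ι, ‖σ x‖ ≤ (M * S) ^ e := by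
    rw [← hcard]
    calc ∏ σ ∈ univ.erase ι, ‖σ x‖ ≤ ∏ _σ ∈ univ.erase ι, (M * S) :=
          Finset.prod_le_prod (fun σ _ => norm_nonneg _) (fun σ _ => hσb σ)
      _ = (M * S) ^ (univ.erase ι).card := Finset.prod_const _
  -- final computation
  have hnorm_nonneg : (0:ℝ) ≤ ‖ι x‖ := norm_nonneg _
  have h2 : ((D:ℝ)^d)⁻¹ ≤ |(q:ℝ)| := (inv_le_iff_one_le_mul₀' hDR).mpr hqlow
  have hkey : ((D:ℝ)^d)⁻¹ ≤ ‖ι x‖ * (M * S) ^ e := by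
    refine le_trans h2 ?_
    rw [← hsplit]
    exact mul_le_mul_of_nonneg_left herase hnorm_nonneg
  have h5 : (1:ℝ) ≤ (D:ℝ)^d * (‖ι x‖ * (M*S)^e) := (inv_le_iff_one_le_mul₀' hDR).mp hkey
  have h7 : (1:ℝ) ≤ ((D:ℝ)^d * M^e * S^e) * ‖ι x‖ := by
    calc (1:ℝ) ≤ (D:ℝ)^d * (‖ι x‖ * (M*S)^e) := h5
      _ = ((D:ℝ)^d * M^e * S^e) * ‖ι x‖ := by rw [mul_pow]; ring
  have hSe : (0:ℝ) < S ^ e := pow_pos hSpos e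
  have hBpos : (0:ℝ) < (D:ℝ)^d * M^e * S^e := mul_pos (mul_pos hDR hMe) hSe
  have h8 : ((D:ℝ)^d * M^e * S^e)⁻¹ ≤ ‖ι x‖ :=
    (inv_le_iff_one_le_mul₀' hBpos).mpr h7
  have hrp : S ^ (-(e:ℝ) - 1) ≤ (S ^ e)⁻¹ := by
    have hh : (S:ℝ) ^ (-(e:ℝ)) = (S ^ e)⁻¹ := by
      rw [Real.rpow_neg (le_of_lt hSpos), Real.rpow_natCast]
    rw [← hh]
    exact Real.rpow_le_rpow_of_exponent_le hS1 (by linarith [Nat.cast_nonneg (α := ℝ) e])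
  have hfin : ((D:ℝ)^d * M^e)⁻¹ * S ^ (-(e:ℝ) - 1) ≤ ‖ι x‖ := by
    calc ((D:ℝ)^d * M^e)⁻¹ * S ^ (-(e:ℝ) - 1)
        ≤ ((D:ℝ)^d * M^e)⁻¹ * (S ^ e)⁻¹ :=
          mul_le_mul_of_nonneg_left hrp (inv_nonneg.mpr (le_of_lt (mul_pos hDR hMe)))
      _ = ((D:ℝ)^d * M^e * S^e)⁻¹ := (mul_inv _ _).symm
      _ ≤ ‖ι x‖ := h8
  rw [← hιx]
  exact hfin
end

section
/- Let K be a number field with s real and 2t complex embeddings, where s ≥ 1 and t ≥ 1. Then there exists a subgroup A of 𝒪_K^{*,+}, free of rank s, such that pr(l(A)) is a lattice of rank s in ℝ^s, i.e. there exists an admissible subgroup for K. -/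
open NumberField NumberField.InfinitePlace

/-- The map `pr ∘ l` of the OT-construction: a unit `u` of `𝒪_K` is sent to
the vector `(log |σ₁(u)|, …, log |σ_s(u)|) ∈ ℝ^s`, whose coordinates are
indexed by the real places of `K` (at a real place the multiplicity is `1`,
so the factor of `l` survives unchanged after the projection `pr`). -/
noncomputable def prLog (K : Type*) [Field K] [NumberField K] (u : (𝓞 K)ˣ) :
    {w : InfinitePlace K // w.IsReal} → ℝ :=
  fun w => Real.log (w.1 ((u : 𝓞 K) : K))

/-- A subgroup `A` of the units of `𝒪_K` is **admissible** for `K` if it is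
contained in `𝒪_K^{*,+}` (all real embeddings positive), is free of rank
`s = nrRealPlaces K`, and `pr (l A)` is a lattice of rank `s` in `ℝ^s`;
equivalently, `A` is generated by `s` units, positive at all real embeddings,
whose images under `pr ∘ l` are linearly independent over `ℝ`. -/
def IsAdmissible (K : Type*) [Field K] [NumberField K]
    (A : Subgroup (𝓞 K)ˣ) : Prop :=
  (∀ u ∈ A, ∀ τ : K →+* ℝ, 0 < τ ((u : 𝓞 K) : K)) ∧
  ∃ g : Fin (nrRealPlaces K) → (𝓞 K)ˣ,
    Subgroup.closure (Set.range g) = A ∧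
    LinearIndependent ℝ (fun i => prLog K (g i))

section Aux

open NumberField.Units NumberField.Units.dirichletUnitTheorem
open scoped Classical

variable (K : Type*) [Field K] [NumberField K]

/-- The linear map recovering `prLog` from the (truncated) logarithmic
embedding of Dirichlet's theorem. -/
noncomputable def qmap : ({w : InfinitePlace K // w ≠ w₀} → ℝ) →ₗ[ℝ]
    ({w : InfinitePlace K // w.IsReal} → ℝ) where
  toFun x w := if h : (w.1 : InfinitePlace K) = w₀ then
      (-(∑ w', x w')) / (mult (w₀ : InfinitePlace K) : ℝ) else x ⟨w.1, h⟩
  map_add' x y := by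
    funext w
    by_cases h : (w.1 : InfinitePlace K) = w₀
    · simp only [dif_pos h, Pi.add_apply, Finset.sum_add_distrib]
      ring
    · simp [h]
  map_smul' c x := by
    funext w
    by_cases h : (w.1 : InfinitePlace K) = w₀
    · simp only [dif_pos h, Pi.smul_apply, smul_eq_mul, ← Finset.mul_sum, RingHom.id_apply]
      ring
    · simp [h]

theorem qmap_logEmbedding (u : (𝓞 K)ˣ) :
    qmap K (logEmbedding K (Additive.ofMul u)) = prLog K u := by
  funext w
  show (if h : (w.1 : InfinitePlace K) = w₀ then _ else _) = _
  by_cases h : (w.1 : InfinitePlace K) = w₀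
  · rw [dif_pos h, sum_logEmbedding_component]
    have hm : ((mult (w₀ : InfinitePlace K) : ℝ)) ≠ 0 := by
      exact_mod_cast mult_ne_zero
    rw [prLog]
    field_simp [h]
    rw [h]
  · rw [dif_neg h, logEmbedding_component]
    have hm : mult (w.1 : InfinitePlace K) = 1 := by
      rw [mult, if_pos w.2]
    rw [hm, prLog]
    simp

theorem qmap_surjective (ht : 1 ≤ nrComplexPlaces K) :
    Function.Surjective (qmap K) := by
  intro y
  set x1 : {w : InfinitePlace K // w ≠ w₀} → ℝ :=
    fun w' => if h : (w'.1 : InfinitePlace K).IsReal then y ⟨w'.1, h⟩ else 0 with hx1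
  by_cases h₀ : (w₀ : InfinitePlace K).IsReal
  · -- w₀ is real: we need a complex place to adjust the sum
    have : Nonempty {w : InfinitePlace K // w.IsComplex} := by
      rw [← Fintype.card_pos_iff]
      exact lt_of_lt_of_le Nat.zero_lt_one ht
    obtain ⟨wc⟩ := this
    have hwc : (wc.1 : InfinitePlace K) ≠ w₀ := by
      intro hh
      exact (not_isReal_iff_isComplex.mpr wc.2) (hh ▸ h₀)
    set S : ℝ := ∑ w', x1 w' with hS
    set c : ℝ := -(mult (w₀ : InfinitePlace K) : ℝ) * y ⟨w₀, h₀⟩ - S with hc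
    set x : {w : InfinitePlace K // w ≠ w₀} → ℝ :=
      x1 + fun w' => if w' = ⟨wc.1, hwc⟩ then c else 0 with hx
    refine ⟨x, ?_⟩
    have hsum : ∑ w', x w' = S + c := by
      rw [hx]
      simp only [Pi.add_apply, Finset.sum_add_distrib, ← hS]
      congr 1
      rw [Finset.sum_ite_eq' Finset.univ (⟨wc.1, hwc⟩ : {w : InfinitePlace K // w ≠ w₀})]
      simp
    funext w
    show (if h : (w.1 : InfinitePlace K) = w₀ then _ else _) = _
    by_cases h : (w.1 : InfinitePlace K) = w₀
    · rw [dif_pos h, hsum]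
      have hm : ((mult (w₀ : InfinitePlace K) : ℝ)) ≠ 0 := by
        exact_mod_cast mult_ne_zero
      have hw : w = ⟨w₀, h₀⟩ := Subtype.ext h
      rw [hw, hc]
      field_simp
      ring
    · rw [dif_neg h]
      have h2 : (⟨w.1, h⟩ : {w : InfinitePlace K // w ≠ w₀}) ≠ ⟨wc.1, hwc⟩ := by
        intro hh
        have : (w.1 : InfinitePlace K) = wc.1 := congrArg Subtype.val hh
        exact (not_isReal_iff_isComplex.mpr wc.2) (this ▸ w.2)
      show x1 ⟨w.1, h⟩ +
        (if (⟨w.1, h⟩ : {w : InfinitePlace K // w ≠ w₀}) = ⟨wc.1, hwc⟩ then c else 0) = y w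
      rw [if_neg h2, add_zero]
      show (if h' : (w.1 : InfinitePlace K).IsReal then y ⟨w.1, h'⟩ else 0) = y w
      rw [dif_pos w.2]
  · -- w₀ is complex: restriction suffices
    refine ⟨x1, ?_⟩
    funext w
    have h : (w.1 : InfinitePlace K) ≠ w₀ := by
      intro hh
      exact h₀ (hh ▸ w.2)
    show (if h : (w.1 : InfinitePlace K) = w₀ then _ else _) = _
    rw [dif_neg h]
    show (if h' : (w.1 : InfinitePlace K).IsReal then y ⟨w.1, h'⟩ else 0) = y w
    rw [dif_pos w.2]

theorem span_prLog (ht : 1 ≤ nrComplexPlaces K) :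
    Submodule.span ℝ (Set.range (prLog K)) = ⊤ := by
  have h1 := unitLattice_span_eq_top K
  have h2 : Submodule.map (qmap K) (Submodule.span ℝ
      ((unitLattice K : Set ({w : InfinitePlace K // w ≠ w₀} → ℝ)))) ≤
      Submodule.span ℝ (Set.range (prLog K)) := by
    rw [Submodule.map_span]
    apply Submodule.span_mono
    rintro _ ⟨v, hv, rfl⟩
    obtain ⟨a, -, rfl⟩ := hv
    exact ⟨a.toMul, by rw [← qmap_logEmbedding K a.toMul]; rfl⟩
  rw [h1, Submodule.map_top, LinearMap.range_eq_top.mpr (qmap_surjective K ht)] at h2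
  exact top_le_iff.mp h2

theorem prLog_sq (u : (𝓞 K)ˣ) : prLog K (u ^ 2) = (2 : ℝ) • prLog K u := by
  funext w
  have hcoe : ((((u ^ 2 : (𝓞 K)ˣ) : 𝓞 K)) : K) = (((u : 𝓞 K) : K)) ^ 2 := by
    push_cast
    ring
  simp only [prLog, Pi.smul_apply, smul_eq_mul, hcoe, map_pow, Real.log_pow]
  push_cast
  ring

end Aux

/-- existence of admissible subgroups, from the
construction of OT-manifolds.  If a number field `K` has `s ≥ 1` real and
`2t` complex embeddings with `t ≥ 1`, then there exists an admissible
subgroup `A` of `𝒪_K^{*,+}`: a subgroup, free of rank `s`, contained in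
`𝒪_K^{*,+}`, with `pr (l A)` a lattice of rank `s` in `ℝ^s`. -/
theorem stmt14 (K : Type*) [Field K] [NumberField K]
    (s t : ℕ) (hs : s = nrRealPlaces K) (ht : t = nrComplexPlaces K)
    (hs1 : 1 ≤ s) (ht1 : 1 ≤ t) :
    ∃ A : Subgroup (𝓞 K)ˣ, IsAdmissible K A := by
  classical
  have htc : 1 ≤ nrComplexPlaces K := ht ▸ ht1
  have hspan := span_prLog K htc
  obtain ⟨b, hb_sub, hb_sp, hb_li⟩ := exists_linearIndependent ℝ (Set.range (prLog K))
  rw [hspan] at hb_sp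
  let B : Module.Basis b ℝ ({w : InfinitePlace K // w.IsReal} → ℝ) :=
    Module.Basis.mk hb_li (by rw [Subtype.range_coe, hb_sp])
  have : Fintype b := FiniteDimensional.fintypeBasisIndex B
  have hcard : Fintype.card b = nrRealPlaces K := by
    rw [← Module.finrank_eq_card_basis B, Module.finrank_pi]
  let e : Fin (nrRealPlaces K) ≃ b := (Fintype.equivFinOfCardEq hcard).symm
  have hmem : ∀ v : b, (v : {w : InfinitePlace K // w.IsReal} → ℝ) ∈ Set.range (prLog K) :=
    fun v => hb_sub v.2
  choose u hu using hmem
  let g : Fin (nrRealPlaces K) → (𝓞 K)ˣ := fun i => (u (e i)) ^ 2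
  refine ⟨Subgroup.closure (Set.range g), ?_, g, rfl, ?_⟩
  · intro v hv τ
    refine Subgroup.closure_induction
      (p := fun (x : (𝓞 K)ˣ) (_ : x ∈ Subgroup.closure (Set.range g)) =>
        0 < τ ((x : 𝓞 K) : K)) ?_ ?_ ?_ ?_ hv
    · rintro x ⟨i, rfl⟩
      have hx : ((((u (e i) : (𝓞 K)ˣ) : 𝓞 K)) : K) ≠ 0 := by
        simp only [ne_eq, NumberField.RingOfIntegers.coe_eq_zero_iff]
        exact Units.ne_zero _
      have hcoe : (((g i : 𝓞 K)) : K) = ((((u (e i) : (𝓞 K)ˣ) : 𝓞 K)) : K) ^ 2 := by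
        show ((((u (e i) ^ 2 : (𝓞 K)ˣ) : 𝓞 K)) : K) = _
        push_cast
        ring
      rw [hcoe, map_pow]
      exact pow_two_pos_of_ne_zero ((map_ne_zero τ).mpr hx)
    · simp
    · intro x y _ _ hx hy
      have hmul : ((((x * y : (𝓞 K)ˣ) : 𝓞 K)) : K)
          = (((x : 𝓞 K)) : K) * (((y : 𝓞 K)) : K) := by
        push_cast; ring
      rw [hmul, map_mul]
      exact mul_pos hx hy
    · intro x _ hx
      have e1 : ((x⁻¹ : (𝓞 K)ˣ) : 𝓞 K) * ((x : (𝓞 K)ˣ) : 𝓞 K) = 1 := by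
        rw [← Units.val_mul, inv_mul_cancel, Units.val_one]
      have e2 : ((((x⁻¹ : (𝓞 K)ˣ) : 𝓞 K)) : K) * (((x : 𝓞 K)) : K) = 1 := by
        exact_mod_cast e1
      have h1 : τ ((((x⁻¹ : (𝓞 K)ˣ) : 𝓞 K)) : K) = (τ (((x : 𝓞 K)) : K))⁻¹ := by
        apply eq_inv_of_mul_eq_one_left
        rw [← map_mul, e2, map_one]
      rw [h1]
      exact inv_pos.mpr hx
  · have hbase : LinearIndependent ℝ (fun i => prLog K (u (e i))) := by
      have heq : (fun i => prLog K (u (e i))) =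
          (fun i : Fin (nrRealPlaces K) =>
            ((e i : b) : {w : InfinitePlace K // w.IsReal} → ℝ)) := by
        funext i
        rw [hu]
      rw [heq]
      exact hb_li.comp e e.injective
    have h2 : (fun i => prLog K (g i)) =
        (fun _ : Fin (nrRealPlaces K) => (Units.mk0 (2:ℝ) two_ne_zero)) •
          fun i => prLog K (u (e i)) := by
      funext i
      show prLog K ((u (e i)) ^ 2) = _
      rw [prLog_sq]
      rfl
    rw [h2]
    exact hbase.units_smul _
end

section
/- Let k ≥ 1, let G be a dense additive subgroup of ℝ^k, regarded as a subgroup of ℂ^k via the standard inclusion ℝ^k ⊆ ℂ^k, and let Ũ ⊆ ℂ^k be a nonempty connected open set with Ũ + x = Ũ for every x ∈ ℝ^k. Let f : Ũ → ℂ be a holomorphic function whose zero set is invariant under translation by G, i.e. f(z) = 0 implies f(z + g) = 0 for every g ∈ G. If f(w) = 0 for some w ∈ Ũ, then f is identically zero on Ũ. -/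
open Complex Filter Set Topology

/-- A function holomorphic on a horizontal strip that vanishes on the central
horizontal line vanishes on the whole strip. -/
lemma strip_zero {g : ℂ → ℂ} {c ε : ℝ} (hε : 0 < ε)
    (hg : DifferentiableOn ℂ g {t : ℂ | |t.im - c| < ε})
    (h0 : ∀ x : ℝ, g (x + c * Complex.I) = 0) :
    ∀ t : ℂ, |t.im - c| < ε → g t = 0 := by
  set S : Set ℂ := {t : ℂ | |t.im - c| < ε} with hS
  have hSopen : IsOpen S := by
    have : S = Complex.im ⁻¹' Metric.ball c ε := by
      ext t; simp [hS, Metric.mem_ball, Real.dist_eq]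
    rw [this]
    exact Complex.continuous_im.isOpen_preimage _ Metric.isOpen_ball
  have hconv : Convex ℝ S := by
    have : S = {t : ℂ | t.im < c + ε} ∩ {t : ℂ | c - ε < t.im} := by
      ext t
      simp only [hS, mem_setOf_eq, mem_inter_iff, abs_sub_lt_iff]
      constructor
      · rintro ⟨h1, h2⟩; constructor <;> linarith
      · rintro ⟨h1, h2⟩; constructor <;> linarith
    rw [this]
    exact (convex_halfSpace_im_lt (c + ε)).inter (convex_halfSpace_im_gt (c - ε))
  have hpre : IsPreconnected S := hconv.isPreconnected
  have hA : AnalyticOnNhd ℂ g S := hg.analyticOnNhd hSopen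
  have hz₀ : (c : ℂ) * Complex.I ∈ S := by
    simp [hS, hε]
  have hfreq : ∃ᶠ z in 𝓝[≠] ((c : ℂ) * Complex.I), g z = 0 := by
    have htend : Tendsto (fun n : ℕ => ((((n : ℝ) + 1)⁻¹ : ℝ) : ℂ) + (c : ℂ) * Complex.I)
        atTop (𝓝 ((c : ℂ) * Complex.I)) := by
      have h1 : Tendsto (fun n : ℕ => ((n : ℝ) + 1)⁻¹) atTop (𝓝 0) :=
        tendsto_one_div_add_atTop_nhds_zero_nat.congr (by intro n; rw [one_div])
      have h2 : Tendsto (fun n : ℕ => ((((n : ℝ) + 1)⁻¹ : ℝ) : ℂ)) atTop (𝓝 (0 : ℂ)) := by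
        exact (Complex.ofRealCLM.continuous.tendsto (0:ℝ)).comp h1 |>.congr (fun n => rfl) |>.mono_right (by simp)
      simpa using h2.add_const ((c : ℂ) * Complex.I)
    have hne : ∀ n : ℕ, ((((n : ℝ) + 1)⁻¹ : ℝ) : ℂ) + (c : ℂ) * Complex.I ≠ (c : ℂ) * Complex.I := by
      intro n h
      have hre := congrArg Complex.re h
      simp only [Complex.add_re, Complex.ofReal_re, Complex.mul_re, Complex.I_re,
        Complex.ofReal_im, Complex.I_im] at hre
      have h1 : (0 : ℝ) < ((n : ℝ) + 1)⁻¹ := by positivity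
      nlinarith [hre]
    have htend' : Tendsto (fun n : ℕ => ((((n : ℝ) + 1)⁻¹ : ℝ) : ℂ) + (c : ℂ) * Complex.I)
        atTop (𝓝[≠] ((c : ℂ) * Complex.I)) :=
      tendsto_nhdsWithin_of_tendsto_nhds_of_eventually_within _ htend
        (Eventually.of_forall fun n => hne n)
    exact htend'.frequently (Frequently.of_forall fun n => h0 _)
  have := hA.eqOn_zero_of_preconnected_of_frequently_eq_zero hpre hz₀ hfreq
  intro t ht
  exact this ht

/-- final step in the proof of Theorem 2.10.  Let `G` be a
dense additive subgroup of `ℝ^k`, viewed inside `ℂ^k` via the standard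
inclusion, and let `Ũ ⊆ ℂ^k` be a nonempty connected open set invariant under
all real translations.  If `f` is holomorphic on `Ũ`, its zero set is
invariant under translation by `G`, and `f` vanishes at some point of `Ũ`,
then `f` vanishes identically on `Ũ`. -/
theorem stmt16 (k : ℕ) (hk : 1 ≤ k) (G : AddSubgroup (Fin k → ℝ))
    (hG : Dense (G : Set (Fin k → ℝ)))
    (U : Set (Fin k → ℂ)) (hUne : U.Nonempty) (hUopen : IsOpen U)
    (hUconn : IsConnected U)
    (hUinv : ∀ x : Fin k → ℝ, (fun z => z + fun i => (x i : ℂ)) '' U = U)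
    (f : (Fin k → ℂ) → ℂ) (hf : DifferentiableOn ℂ f U)
    (hzero : ∀ z ∈ U, f z = 0 → ∀ g ∈ G, f (z + fun i => (g i : ℂ)) = 0)
    (w : Fin k → ℂ) (hw : w ∈ U) (hfw : f w = 0) :
    ∀ z ∈ U, f z = 0 := by
  classical
  -- translation invariance
  have htrans : ∀ z ∈ U, ∀ x : Fin k → ℝ, (z + fun i => ((x i : ℝ) : ℂ)) ∈ U := by
    intro z hz x
    rw [← hUinv x]
    exact ⟨z, hz, rfl⟩
  -- Step 1: f vanishes on w + ℝ^k
  have hstep1 : ∀ x : Fin k → ℝ, f (w + fun i => ((x i : ℝ) : ℂ)) = 0 := by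
    have hcont : Continuous fun x : Fin k → ℝ => f (w + fun i => ((x i : ℝ) : ℂ)) := by
      apply hf.continuousOn.comp_continuous
      · apply Continuous.add continuous_const
        exact continuous_pi fun i => Complex.continuous_ofReal.comp (continuous_apply i)
      · intro x; exact htrans w hw x
    have heq : (fun x : Fin k → ℝ => f (w + fun i => ((x i : ℝ) : ℂ))) = fun _ => (0 : ℂ) := by
      apply Continuous.ext_on hG hcont continuous_const
      intro g hg
      exact hzero w hw hfw g hg
    intro x
    exact congrFun heq x
  -- the tube base
  set Ω : Set (Fin k → ℝ) := {b | (fun i => ((b i : ℝ) : ℂ) * Complex.I) ∈ U} with hΩdef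
  have hmem_iff : ∀ z : Fin k → ℂ, z ∈ U ↔ (fun i => (z i).im) ∈ Ω := by
    intro z
    simp only [hΩdef, mem_setOf_eq]
    constructor
    · intro hz
      have := htrans z hz fun i => -(z i).re
      convert this using 2 with i
      apply Complex.ext <;> simp
    · intro hz
      have := htrans _ hz fun i => (z i).re
      have heq : z = (fun i => ((z i).im : ℂ) * Complex.I) + fun i => (((z i).re : ℝ) : ℂ) := by
        funext i
        apply Complex.ext <;> simp
      rw [heq]
      exact this
  have hΩopen : IsOpen Ω := by
    have : Continuous fun b : Fin k → ℝ => fun i => ((b i : ℝ) : ℂ) * Complex.I :=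
      continuous_pi fun i =>
        ((Complex.continuous_ofReal.comp (continuous_apply i)).mul continuous_const)
    exact hUopen.preimage this
  have hΩconn : IsPreconnected Ω := by
    have himg : Ω = (fun z : Fin k → ℂ => fun i => (z i).im) '' U := by
      ext b
      constructor
      · intro hb
        refine ⟨fun i => ((b i : ℝ) : ℂ) * Complex.I, hb, ?_⟩
        funext i; simp
      · rintro ⟨z, hz, rfl⟩
        exact (hmem_iff z).1 hz
    rw [himg]
    exact (hUconn.image _ (Continuous.continuousOn
      (continuous_pi fun i => Complex.continuous_im.comp (continuous_apply i)))).isPreconnected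
  -- the set of good base points
  set A : Set (Fin k → ℝ) :=
    {b | b ∈ Ω ∧ ∀ z ∈ U, (fun i => (z i).im) = b → f z = 0} with hAdef
  -- A is open
  have hAopen : IsOpen A := by
    rw [isOpen_iff_mem_nhds]
    intro b hb
    obtain ⟨hbΩ, hbz⟩ := hb
    obtain ⟨ε, hε, hball⟩ := Metric.isOpen_iff.1 hΩopen b hbΩ
    have key : ∀ j : ℕ, j ≤ k → ∀ z ∈ U,
        (∀ i : Fin k, dist ((z i).im) (b i) < ε) →
        (∀ i : Fin k, j ≤ (i : ℕ) → (z i).im = b i) → f z = 0 := by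
      intro j
      induction j with
      | zero =>
        intro _ z hz hdist him
        apply hbz z hz
        funext i
        exact him i (Nat.zero_le _)
      | succ j ih =>
        intro hjk z hz hdist him
        have hjk' : j < k := hjk
        set J : Fin k := ⟨j, hjk'⟩ with hJ
        set η : ℂ → (Fin k → ℂ) := fun t => Function.update z J t with hη
        -- points of the strip map into U
        have hmemU : ∀ t : ℂ, |t.im - b J| < ε → η t ∈ U := by
          intro t ht
          rw [hmem_iff]
          apply hball
          rw [Metric.mem_ball, dist_pi_lt_iff hε]
          intro i
          by_cases hi : i = J
          · subst hi
            simp only [hη, Function.update_self]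
            rwa [Real.dist_eq]
          · simp only [hη, Function.update_of_ne hi]
            exact hdist i
        -- g is the slice function
        set g : ℂ → ℂ := fun t => f (η t) with hg
        have hηdiff : Differentiable ℂ η := by
          have : η = fun t => fun i => if i = J then t else z i := by
            funext t i
            exact Function.update_apply z J t i
          rw [this]
          apply differentiable_pi.mpr
          intro i
          by_cases hi : i = J <;> simp [hi]
        have hgdiff : DifferentiableOn ℂ g {t : ℂ | |t.im - b J| < ε} := by
          intro t ht
          apply DifferentiableAt.differentiableWithinAt
          have h1 : DifferentiableAt ℂ f (η t) :=
            (hf (η t) (hmemU t ht)).differentiableAt (hUopen.mem_nhds (hmemU t ht))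
          exact h1.comp t (hηdiff t)
        have h0 : ∀ x : ℝ, g ((x : ℂ) + (b J : ℝ) * Complex.I) = 0 := by
          intro x
          set t : ℂ := (x : ℂ) + (b J : ℝ) * Complex.I with htdef
          have htim : t.im = b J := by simp [htdef]
          have htS : |t.im - b J| < ε := by rw [htim]; simpa using hε
          apply ih (le_of_lt hjk') (η t) (hmemU t htS)
          · intro i
            by_cases hi : i = J
            · subst hi
              simp only [hη, Function.update_self, htim]
              simpa [Real.dist_eq] using hε
            · simp only [hη, Function.update_of_ne hi]
              exact hdist i
          · intro i hji
            by_cases hi : i = J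
            · subst hi
              simp only [hη, Function.update_self, htim]
            · simp only [hη, Function.update_of_ne hi]
              apply him i
              rcases Nat.lt_or_ge (i : ℕ) (j + 1) with h | h
              · exfalso
                apply hi
                have : (i : ℕ) = j := le_antisymm (Nat.lt_succ_iff.1 h) hji
                exact Fin.ext this
              · exact h
        have := strip_zero hε hgdiff h0 (z J)
          (by have := hdist J; rwa [Real.dist_eq] at this)
        simpa [hg, hη, Function.update_eq_self] using this
    refine Filter.mem_of_superset (Metric.ball_mem_nhds b hε) ?_
    intro b' hb'
    refine ⟨hball hb', ?_⟩
    intro z hz hzim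
    apply key k le_rfl z hz
    · intro i
      have : dist (b' i) (b i) < ε := (dist_pi_lt_iff hε).1 (Metric.mem_ball.1 hb') i
      have hzi : (z i).im = b' i := congrFun hzim i
      rwa [hzi]
    · intro i hik
      exact absurd hik (not_le.2 i.isLt)
  -- closure points of A in Ω belong to A
  have hAclosed : closure A ∩ Ω ⊆ A := by
    rintro b ⟨hbcl, hbΩ⟩
    refine ⟨hbΩ, ?_⟩
    intro z hz hzim
    obtain ⟨u, hu, hulim⟩ := mem_closure_iff_seq_limit.1 hbcl
    set φ : (Fin k → ℝ) → (Fin k → ℂ) := fun b' => fun i => ((z i).re : ℂ) + (b' i : ℝ) * Complex.I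
      with hφ
    have hφcont : Continuous φ :=
      continuous_pi fun i => continuous_const.add
        ((Complex.continuous_ofReal.comp (continuous_apply i)).mul continuous_const)
    have hφb : φ b = z := by
      funext i
      have : b i = (z i).im := (congrFun hzim i).symm
      rw [hφ]; simp only [this]
      exact Complex.re_add_im (z i)
    have hφlim : Tendsto (fun n => φ (u n)) atTop (𝓝 z) := by
      rw [← hφb]
      exact (hφcont.tendsto b).comp hulim
    have hev : ∀ᶠ n in atTop, φ (u n) ∈ U :=
      hφlim.eventually (hUopen.mem_nhds hz)
    have hfz : Tendsto (fun n => f (φ (u n))) atTop (𝓝 (f z)) :=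
      ((hf.continuousOn.continuousAt (hUopen.mem_nhds hz)).tendsto).comp hφlim
    have hzero' : ∀ᶠ n in atTop, f (φ (u n)) = 0 := by
      filter_upwards [hev] with n hn
      apply (hu n).2 _ hn
      funext i
      simp [hφ]
    have : Tendsto (fun n => f (φ (u n))) atTop (𝓝 0) :=
      Tendsto.congr' (by filter_upwards [hzero'] with n hn; exact hn.symm) tendsto_const_nhds
    exact tendsto_nhds_unique hfz this
  -- A is nonempty: im w ∈ A
  have hwA : (fun i => (w i).im) ∈ A := by
    refine ⟨(hmem_iff w).1 hw, ?_⟩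
    intro z hz hzim
    have hz' : z = w + fun i => (((fun i => (z i).re - (w i).re) i : ℝ) : ℂ) := by
      funext i
      apply Complex.ext <;> simp
      exact congrFun hzim i
    rw [hz']
    exact hstep1 _
  -- conclude by connectedness
  have hΩA : Ω ⊆ A :=
    hΩconn.subset_of_closure_inter_subset hAopen ⟨_, hwA.1, hwA⟩ hAclosed
  intro z hz
  exact ((hΩA ((hmem_iff z).1 hz)).2) z hz rfl
end
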